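/- arXiv:2311.07352 — 8 statements merged into one kernel-verified Lean document; each statement's English description precedes it below -/
import Mathlib

section
/- Let f, g : [b, ∞) → ℝ be continuous with f(t) < g(t) for all t ≥ b. Then there exists a real analytic function y : [b, ∞) → ℝ (i.e., extending to a real analytic function on an open neighborhood of [b, ∞)) such that f(t) < y(t) < g(t) for all t ≥ b. -/
open Set Polynomial Filter
set_option maxHeartbeats 1000000

noncomputable section CarlemanAux

/-- real logistic cutoff -/
def logi (κ c t : ℝ) : ℝ := (1 + Real.exp (-(κ * (t - c))))⁻¹
/-- complex logistic cutoff -/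
def logiC (κ c : ℝ) (z : ℂ) : ℂ := (1 + Complex.exp (-(κ * (z - c))))⁻¹

lemma denR_pos (κ c t : ℝ) : 0 < 1 + Real.exp (-(κ * (t - c))) := by positivity

lemma logi_pos (κ c t : ℝ) : 0 < logi κ c t := by unfold logi; positivity

lemma logi_le_one (κ c t : ℝ) : logi κ c t ≤ 1 := by
  rw [logi, inv_le_one_iff₀]; right
  nlinarith [Real.exp_pos (-(κ * (t - c)))]

lemma one_sub_logi_le (κ c t : ℝ) : 1 - logi κ c t ≤ Real.exp (-(κ * (t - c))) := by
  have h := denR_pos κ c t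
  have key : 1 - logi κ c t = Real.exp (-(κ * (t - c))) / (1 + Real.exp (-(κ * (t - c)))) := by
    rw [logi]; field_simp; ring
  rw [key]
  exact div_le_self (Real.exp_pos _).le (by nlinarith [Real.exp_pos (-(κ * (t - c)))])

lemma logi_continuous (κ c : ℝ) : Continuous (logi κ c) := by
  apply Continuous.inv₀
  · fun_prop
  · intro t; exact (denR_pos κ c t).ne'

lemma logiC_ofReal (κ c t : ℝ) : logiC κ c (t : ℂ) = (logi κ c t : ℂ) := by
  simp [logiC, logi]

lemma denC_ne_zero_of_im {κ c : ℝ} (hκ : 0 < κ) {z : ℂ} (h : |z.im| < Real.pi / κ) :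
    1 + Complex.exp (-(κ * (z - c))) ≠ 0 := by
  intro hc
  have he : Complex.exp (-(κ * (z - c))) = -1 := by linear_combination hc
  set w : ℂ := -(κ * (z - c)) with hw
  have him : |w.im| < Real.pi := by
    have : w.im = -(κ * z.im) := by simp [hw]
    rw [this, abs_neg, abs_mul, abs_of_pos hκ]
    calc κ * |z.im| < κ * (Real.pi / κ) := by exact mul_lt_mul_of_pos_left h hκ
    _ = Real.pi := by field_simp
  have h1 : Real.exp w.re * Real.sin w.im = 0 := by
    have := congrArg Complex.im he
    simpa [Complex.exp_im] using this
  have h2 : Real.sin w.im = 0 := by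
    have := Real.exp_pos w.re
    rcases mul_eq_zero.mp h1 with h | h
    · linarith
    · exact h
  have h3 : w.im = 0 := by
    rw [Real.sin_eq_zero_iff_of_lt_of_lt (by cases abs_lt.mp him; linarith) (abs_lt.mp him).2] at h2
    exact h2
  have h4 : (Complex.exp w).re = Real.exp w.re := by
    rw [Complex.exp_re, h3]; simp
  rw [he] at h4
  simp at h4
  have := Real.exp_pos w.re
  linarith

lemma norm_exp_den (κ c : ℝ) (z : ℂ) :
    ‖Complex.exp (-(κ * (z - c)))‖ = Real.exp (κ * (c - z.re)) := by
  rw [Complex.norm_exp]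
  congr 1
  simp [mul_comm]
  ring

lemma denC_ne_zero_of_re {κ c : ℝ} (hκ : 0 < κ) {z : ℂ} (h : z.re < c) :
    1 + Complex.exp (-(κ * (z - c))) ≠ 0 := by
  intro hc
  have he : Complex.exp (-(κ * (z - c))) = -1 := by linear_combination hc
  have := norm_exp_den κ c z
  rw [he] at this
  simp at this
  nlinarith [Real.exp_lt_exp.mpr (show (0:ℝ) < κ * (c - z.re) by nlinarith), Real.exp_zero]

lemma normLogiC_le {κ c : ℝ} (hκ : 1 ≤ κ) {z : ℂ} (h : z.re ≤ c - 1/2) :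
    ‖logiC κ c z‖ ≤ (Real.exp (κ / 2) - 1)⁻¹ := by
  have hκ0 : 0 < κ := by linarith
  have h1 : Real.exp (κ / 2) ≤ Real.exp (κ * (c - z.re)) := by
    apply Real.exp_le_exp_of_le; nlinarith
  have h2 : (1:ℝ) < Real.exp (κ / 2) := by
    rw [← Real.exp_zero]; apply Real.exp_lt_exp.mpr; linarith
  have hden : Real.exp (κ / 2) - 1 ≤ ‖1 + Complex.exp (-(κ * (z - c)))‖ := by
    calc Real.exp (κ / 2) - 1 ≤ Real.exp (κ * (c - z.re)) - 1 := by linarith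
    _ = ‖Complex.exp (-(κ * (z - c)))‖ - ‖(1:ℂ)‖ := by rw [norm_exp_den]; simp
    _ ≤ ‖1 + Complex.exp (-(κ * (z - c)))‖ := by
        have := norm_sub_norm_le (Complex.exp (-(κ * (z - c)))) (-1)
        simpa [add_comm] using this
  rw [logiC, norm_inv]
  exact inv_anti₀ (by linarith) hden

lemma polyC_ofReal (Q : Polynomial ℝ) (t : ℝ) :
    (Q.map (algebraMap ℝ ℂ)).eval (t : ℂ) = ((Q.eval t : ℝ) : ℂ) := by
  rw [Polynomial.eval_map]
  have : ((t:ℝ):ℂ) = algebraMap ℝ ℂ t := rfl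
  rw [this, Polynomial.eval₂_at_apply]
  rfl

lemma UC_diffAt (Q : Polynomial ℝ) (κ c : ℝ) {z : ℂ}
    (h : 1 + Complex.exp (-(κ * (z - c))) ≠ 0) :
    DifferentiableAt ℂ (fun w => (Q.map (algebraMap ℝ ℂ)).eval w * logiC κ c w) z := by
  apply DifferentiableAt.mul
  · exact (Q.map (algebraMap ℝ ℂ)).differentiable.differentiableAt
  · unfold logiC
    have hd : DifferentiableAt ℂ (fun w : ℂ => 1 + Complex.exp (-(κ * (w - c)))) z := by
      apply DifferentiableAt.add (differentiableAt_const _)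
      apply DifferentiableAt.cexp
      fun_prop
    exact hd.inv h

/-! ### block data -/

variable (b : ℝ) (Z E : ℝ → ℝ)

/-- left endpoint of block `N` -/
def tP (N : ℕ) : ℝ := b - 2 + N
/-- cutoff center for block `N` -/
def cP (N : ℕ) : ℝ := tP b N - 1/2

lemma tP_succ (N : ℕ) : tP b (N + 1) = tP b N + 1 := by
  simp [tP]; push_cast; ring

/-- minimum of the tolerance on the window up to block `N` -/
def mu (N : ℕ) : ℝ := sInf (E '' Icc (b - 3) (b - 1 + N))

section mu
variable (hE : Continuous E) (hEpos : ∀ t, 0 < E t)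
include hE hEpos

lemma window_nonempty (N : ℕ) : (Icc (b - 3) (b - 1 + (N:ℝ))).Nonempty := by
  apply nonempty_Icc.mpr
  have : (0:ℝ) ≤ N := Nat.cast_nonneg N
  linarith

lemma mu_pos (N : ℕ) : 0 < mu b E N := by
  have h1 := (isCompact_Icc.image_of_continuousOn hE.continuousOn).sInf_mem
    ((window_nonempty b E hE hEpos N).image E)
  obtain ⟨t, _, heq⟩ := h1
  rw [mu, ← heq]
  exact hEpos t

lemma mu_le (N : ℕ) {t : ℝ} (ht : t ∈ Icc (b - 3) (b - 1 + N)) : mu b E N ≤ E t := by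
  apply csInf_le ((isCompact_Icc.image_of_continuousOn hE.continuousOn).bddBelow)
  exact mem_image_of_mem E ht

lemma mu_anti {M N : ℕ} (h : M ≤ N) : mu b E N ≤ mu b E M := by
  apply csInf_le_csInf ((isCompact_Icc.image_of_continuousOn hE.continuousOn).bddBelow)
    ((window_nonempty b E hE hEpos M).image E)
  apply image_mono
  apply Icc_subset_Icc le_rfl
  have : (M:ℝ) ≤ N := Nat.cast_le.mpr h
  linarith

end mu

def del (N : ℕ) : ℝ := mu b E (N + 1) / 16
def bet (N : ℕ) : ℝ := (1/2)^N * mu b E N / 8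

/-- Specification of one correction step: `Q` approximates the residual `Z - S`
on the extended block, and the cutoff slope `κ` is steep enough. -/
def StepSpec (N : ℕ) (S : ℝ → ℝ) (Q : Polynomial ℝ) (κ : ℝ) : Prop :=
  1 ≤ κ ∧
  (∀ t ∈ Icc (tP b N - 1) (tP b N + 1), |Q.eval t - (Z t - S t)| ≤ del b E N) ∧
  (∀ t ∈ Icc (tP b N) (tP b N + 1), |Z t - S t| * Real.exp (-(κ/2)) ≤ del b E N) ∧
  (∀ z : ℂ, b - 2 ≤ z.re → z.re ≤ tP b N - 1 → |z.im| ≤ 1/4 →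
    ‖(Q.map (algebraMap ℝ ℂ)).eval z * logiC κ (cP b N) z‖ ≤ bet b E N)

lemma step_exists (hZ : Continuous Z) (hE : Continuous E) (hEpos : ∀ t, 0 < E t)
    (N : ℕ) (S : ℝ → ℝ) (hS : Continuous S) :
    ∃ p : Polynomial ℝ × ℝ, StepSpec b Z E N S p.1 p.2 := by
  have hdel : 0 < del b E N := by
    have := mu_pos b E hE hEpos (N+1); rw [del]; linarith
  have hbet : 0 < bet b E N := by
    have := mu_pos b E hE hEpos N; rw [bet]; positivity
  obtain ⟨Q, hQ⟩ := exists_polynomial_near_of_continuousOn (tP b N - 1) (tP b N + 1)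
    (fun t => Z t - S t) ((hZ.sub hS).continuousOn) (del b E N) hdel
  obtain ⟨W0, hW0⟩ := (isCompact_Icc (a := tP b N) (b := tP b N + 1)).exists_bound_of_continuousOn
      ((hZ.sub hS).continuousOn)
  set W := max W0 0 with hWdef
  have hW : 0 ≤ W := le_max_right _ _
  set R : ℝ := |b| + N + 4 with hRdef
  obtain ⟨M0, hM0⟩ := (isCompact_closedBall (0:ℂ) R).exists_bound_of_continuousOn
      ((Q.map (algebraMap ℝ ℂ)).continuous.continuousOn)
  set M := max M0 0 with hMdef
  have hM : 0 ≤ M := le_max_right _ _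
  set T : ℝ := max ((M+1)/bet b E N + 1) ((W+1)/del b E N) + 3 with hTdef
  have hmax0 : 0 ≤ max ((M+1)/bet b E N + 1) ((W+1)/del b E N) := by
    apply le_trans _ (le_max_left _ _); positivity
  have hT3 : (3:ℝ) ≤ T := by rw [hTdef]; linarith
  have hTpos : (0:ℝ) < T := by linarith
  set κ : ℝ := 2 * Real.log T with hκdef
  have hexp : Real.exp (κ/2) = T := by
    rw [hκdef]
    have : 2 * Real.log T / 2 = Real.log T := by ring
    rw [this, Real.exp_log hTpos]
  have hκ1 : 1 ≤ κ := by
    rw [hκdef]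
    have h1 : Real.exp (1/2 : ℝ) ≤ T := by
      calc Real.exp (1/2 : ℝ) ≤ Real.exp 1 := Real.exp_le_exp_of_le (by norm_num)
      _ ≤ 2.7182818286 := Real.exp_one_lt_d9.le
      _ ≤ 3 := by norm_num
      _ ≤ T := hT3
    have := (Real.le_log_iff_exp_le hTpos).mpr h1
    linarith
  have hκpos : 0 < κ := by linarith
  refine ⟨⟨Q, κ⟩, hκ1, ?_, ?_, ?_⟩
  · intro t ht; exact (hQ t ht).le
  · intro t ht
    have h1 : |Z t - S t| ≤ W := by
      have := hW0 t ht
      rw [hWdef]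
      refine le_trans ?_ (le_max_left _ _)
      simpa using this
    have h2 : Real.exp (-(κ/2)) = T⁻¹ := by rw [Real.exp_neg, hexp]
    rw [h2]
    have hT2 : (W+1)/del b E N ≤ T := by
      have := le_max_right ((M+1)/bet b E N + 1) ((W+1)/del b E N)
      rw [hTdef]; linarith
    have h3 : W + 1 ≤ T * del b E N := by
      rw [div_le_iff₀ hdel] at hT2; linarith
    have h4 : |Z t - S t| * T⁻¹ ≤ W * T⁻¹ := by
      apply mul_le_mul_of_nonneg_right h1 (by positivity)
    refine le_trans h4 ?_
    rw [mul_inv_le_iff₀ hTpos]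
    nlinarith
  · intro z h1 h2 h3
    have hzball : z ∈ Metric.closedBall (0:ℂ) R := by
      rw [Metric.mem_closedBall, dist_zero_right]
      have hre : |z.re| ≤ |b| + N + 3 := by
        rw [abs_le]
        constructor
        · have := neg_abs_le b
          have hN : (0:ℝ) ≤ N := Nat.cast_nonneg N
          linarith
        · have := le_abs_self b
          rw [tP] at h2
          linarith
      calc ‖z‖ ≤ |z.re| + |z.im| := Complex.norm_le_abs_re_add_abs_im z
      _ ≤ (|b| + N + 3) + 1/4 := add_le_add hre h3
      _ ≤ R := by rw [hRdef]; linarith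
    have hQb : ‖(Q.map (algebraMap ℝ ℂ)).eval z‖ ≤ M := by
      refine le_trans (hM0 z hzball) (le_max_left _ _)
    have hlb : ‖logiC κ (cP b N) z‖ ≤ (Real.exp (κ/2) - 1)⁻¹ := by
      apply normLogiC_le hκ1
      rw [cP]; linarith
    rw [hexp] at hlb
    have hT1 : (M+1)/bet b E N ≤ T - 1 := by
      have := le_max_left ((M+1)/bet b E N + 1) ((W+1)/del b E N)
      rw [hTdef]; linarith
    have h5 : M + 1 ≤ (T - 1) * bet b E N := by
      rw [div_le_iff₀ hbet] at hT1
      linarith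
    have hT1pos : (0:ℝ) < T - 1 := by linarith
    calc ‖(Q.map (algebraMap ℝ ℂ)).eval z * logiC κ (cP b N) z‖
        = ‖(Q.map (algebraMap ℝ ℂ)).eval z‖ * ‖logiC κ (cP b N) z‖ := norm_mul _ _
    _ ≤ M * (T - 1)⁻¹ := by
        apply mul_le_mul hQb hlb (norm_nonneg _) hM
    _ ≤ bet b E N := by
        rw [mul_inv_le_iff₀ hT1pos]
        nlinarith

/-! ### the recursive construction -/

variable (hZ : Continuous Z) (hE : Continuous E) (hEpos : ∀ t, 0 < E t)

def st : ℕ → {S : ℝ → ℝ // Continuous S} × (Polynomial ℝ × ℝ)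
  | 0 => (⟨fun _ => 0, continuous_const⟩,
      Classical.choose (step_exists b Z E hZ hE hEpos 0 (fun _ => 0) continuous_const))
  | (N+1) =>
      let p := st N
      let S' : {S : ℝ → ℝ // Continuous S} :=
        ⟨fun t => p.1.1 t + p.2.1.eval t * logi p.2.2 (cP b N) t,
          p.1.2.add (p.2.1.continuous_aeval.mul (logi_continuous _ _))⟩
      (S', Classical.choose (step_exists b Z E hZ hE hEpos (N+1) S'.1 S'.2))

/-- partial sums -/
def SSf (N : ℕ) : ℝ → ℝ := (st b Z E hZ hE hEpos N).1.1
/-- the `N`-th polynomial -/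
def QN (N : ℕ) : Polynomial ℝ := (st b Z E hZ hE hEpos N).2.1
/-- the `N`-th slope -/
def kN (N : ℕ) : ℝ := (st b Z E hZ hE hEpos N).2.2
/-- the `N`-th real term -/
def uN (N : ℕ) : ℝ → ℝ := fun t =>
  (QN b Z E hZ hE hEpos N).eval t * logi (kN b Z E hZ hE hEpos N) (cP b N) t
/-- the `N`-th complex term -/
def UCf (N : ℕ) : ℂ → ℂ := fun z =>
  ((QN b Z E hZ hE hEpos N).map (algebraMap ℝ ℂ)).eval z *
    logiC (kN b Z E hZ hE hEpos N) (cP b N) z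

lemma SSf_zero : SSf b Z E hZ hE hEpos 0 = fun _ => 0 := rfl

lemma SSf_succ (N : ℕ) : SSf b Z E hZ hE hEpos (N+1) =
    fun t => SSf b Z E hZ hE hEpos N t + uN b Z E hZ hE hEpos N t := rfl

lemma st_spec (N : ℕ) : StepSpec b Z E N (SSf b Z E hZ hE hEpos N)
    (QN b Z E hZ hE hEpos N) (kN b Z E hZ hE hEpos N) := by
  cases N with
  | zero =>
      exact Classical.choose_spec (step_exists b Z E hZ hE hEpos 0 (fun _ => 0) continuous_const)
  | succ M =>
      exact Classical.choose_spec (step_exists b Z E hZ hE hEpos (M+1)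
        (st b Z E hZ hE hEpos (M+1)).1.1 (st b Z E hZ hE hEpos (M+1)).1.2)

lemma kN_one (N : ℕ) : 1 ≤ kN b Z E hZ hE hEpos N := (st_spec b Z E hZ hE hEpos N).1

lemma SSf_eq_sum (M : ℕ) (t : ℝ) :
    SSf b Z E hZ hE hEpos M t = ∑ k ∈ Finset.range M, uN b Z E hZ hE hEpos k t := by
  induction M with
  | zero => simp [SSf_zero]
  | succ m ih =>
      rw [Finset.sum_range_succ, ← ih]
      exact congrFun (SSf_succ b Z E hZ hE hEpos m) t

lemma invA (N : ℕ) (hZ0 : ∀ t ≤ b - 2, Z t = 0) :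
    ∀ t ∈ Icc (tP b N - 1) (tP b N), |SSf b Z E hZ hE hEpos N t - Z t| ≤ mu b E N / 8 := by
  cases N with
  | zero =>
      intro t ht
      have hZt : Z t = 0 := hZ0 t (by have := ht.2; rw [tP] at this; simpa using this)
      have : SSf b Z E hZ hE hEpos 0 t = 0 := rfl
      rw [this, hZt]
      simp
      linarith [mu_pos b E hE hEpos 0]
  | succ M =>
      intro t ht0
      rw [tP_succ] at ht0
      have ht : t ∈ Icc (tP b M) (tP b M + 1) := ⟨by linarith [ht0.1], ht0.2⟩
      obtain ⟨hκ1, hs1, hs3, _⟩ := st_spec b Z E hZ hE hEpos M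
      set κ := kN b Z E hZ hE hEpos M with hκdef
      set θ := logi κ (cP b M) t with hθdef
      set w := Z t - SSf b Z E hZ hE hEpos M t with hwdef
      set q := (QN b Z E hZ hE hEpos M).eval t with hqdef
      have hident : SSf b Z E hZ hE hEpos (M+1) t - Z t = (θ - 1) * w + θ * (q - w) := by
        have h1 : SSf b Z E hZ hE hEpos (M+1) t
            = SSf b Z E hZ hE hEpos M t + q * θ := congrFun (SSf_succ b Z E hZ hE hEpos M) t
        rw [h1, hwdef]; ring
      have hθ1 : θ ≤ 1 := logi_le_one _ _ _
      have hθ0 : 0 < θ := logi_pos _ _ _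
      have hexp2 : 1 - θ ≤ Real.exp (-(κ/2)) := by
        refine le_trans (one_sub_logi_le κ (cP b M) t) ?_
        apply Real.exp_le_exp_of_le
        have hc : cP b M + 1/2 ≤ t := by rw [cP]; linarith [ht.1, sub_add_cancel (tP b M) 1]
        nlinarith [ht.1]
      have hterm1 : |(θ - 1) * w| ≤ del b E M := by
        rw [abs_mul, abs_sub_comm]
        rw [abs_of_nonneg (by linarith : (0:ℝ) ≤ 1 - θ)]
        calc (1 - θ) * |w| ≤ Real.exp (-(κ/2)) * |w| :=
              mul_le_mul_of_nonneg_right hexp2 (abs_nonneg _)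
        _ = |w| * Real.exp (-(κ/2)) := by ring
        _ ≤ del b E M := hs3 t ⟨ht.1, ht.2⟩
      have hterm2 : |θ * (q - w)| ≤ del b E M := by
        rw [abs_mul, abs_of_pos hθ0]
        calc θ * |q - w| ≤ 1 * |q - w| := mul_le_mul_of_nonneg_right hθ1 (abs_nonneg _)
        _ = |q - w| := one_mul _
        _ ≤ del b E M := hs1 t ⟨by linarith [ht.1], ht.2⟩
      rw [hident]
      calc |(θ - 1) * w + θ * (q - w)| ≤ |(θ - 1) * w| + |θ * (q - w)| := abs_add_le _ _
      _ ≤ del b E M + del b E M := add_le_add hterm1 hterm2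
      _ = mu b E (M+1) / 8 := by rw [del]; ring

lemma invB (N : ℕ) (hZ0 : ∀ t ≤ b - 2, Z t = 0) :
    ∀ t ∈ Icc (tP b N - 1) (tP b N),
      |SSf b Z E hZ hE hEpos (N+1) t - Z t| ≤ mu b E N * (3/16) := by
  intro t ht
  obtain ⟨hκ1, hs1, _, _⟩ := st_spec b Z E hZ hE hEpos N
  set κ := kN b Z E hZ hE hEpos N with hκdef
  set θ := logi κ (cP b N) t with hθdef
  set w := Z t - SSf b Z E hZ hE hEpos N t with hwdef
  set q := (QN b Z E hZ hE hEpos N).eval t with hqdef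
  have hident : SSf b Z E hZ hE hEpos (N+1) t - Z t = (θ - 1) * w + θ * (q - w) := by
    have h1 : SSf b Z E hZ hE hEpos (N+1) t
        = SSf b Z E hZ hE hEpos N t + q * θ := congrFun (SSf_succ b Z E hZ hE hEpos N) t
    rw [h1, hwdef]; ring
  have hθ1 : θ ≤ 1 := logi_le_one _ _ _
  have hθ0 : 0 < θ := logi_pos _ _ _
  have hw8 : |w| ≤ mu b E N / 8 := by
    rw [hwdef, abs_sub_comm]
    exact invA b Z E hZ hE hEpos N hZ0 t ht
  have hterm1 : |(θ - 1) * w| ≤ mu b E N / 8 := by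
    rw [abs_mul, abs_sub_comm]
    rw [abs_of_nonneg (by linarith : (0:ℝ) ≤ 1 - θ)]
    calc (1 - θ) * |w| ≤ 1 * |w| := mul_le_mul_of_nonneg_right (by linarith) (abs_nonneg _)
    _ = |w| := one_mul _
    _ ≤ mu b E N / 8 := hw8
  have hterm2 : |θ * (q - w)| ≤ del b E N := by
    rw [abs_mul, abs_of_pos hθ0]
    calc θ * |q - w| ≤ 1 * |q - w| := mul_le_mul_of_nonneg_right hθ1 (abs_nonneg _)
    _ = |q - w| := one_mul _
    _ ≤ del b E N := hs1 t ⟨ht.1, by linarith [ht.2]⟩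
  have hdelmu : del b E N ≤ mu b E N / 16 := by
    rw [del]
    have := mu_anti b E hE hEpos (Nat.le_succ N)
    linarith
  rw [hident]
  calc |(θ - 1) * w + θ * (q - w)| ≤ |(θ - 1) * w| + |θ * (q - w)| := abs_add_le _ _
  _ ≤ mu b E N / 8 + mu b E N / 16 := add_le_add hterm1 (le_trans hterm2 hdelmu)
  _ = mu b E N * (3/16) := by ring

lemma UCf_ofReal (N : ℕ) (t : ℝ) :
    UCf b Z E hZ hE hEpos N (t : ℂ) = ((uN b Z E hZ hE hEpos N t : ℝ) : ℂ) := by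
  rw [UCf, uN, polyC_ofReal, logiC_ofReal]
  push_cast
  ring

lemma u_small (N : ℕ) (t : ℝ) (h1 : b - 2 ≤ t) (h2 : t ≤ tP b N - 1) :
    |uN b Z E hZ hE hEpos N t| ≤ bet b E N := by
  obtain ⟨_, _, _, hs4⟩ := st_spec b Z E hZ hE hEpos N
  have := hs4 (t : ℂ) (by simpa using h1) (by simpa using h2) (by simp)
  rw [show ((QN b Z E hZ hE hEpos N).map (algebraMap ℝ ℂ)).eval (t:ℂ) *
      logiC (kN b Z E hZ hE hEpos N) (cP b N) (t:ℂ)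
      = UCf b Z E hZ hE hEpos N (t:ℂ) from rfl, UCf_ofReal] at this
  rwa [Complex.norm_real, Real.norm_eq_abs] at this

lemma bet_nonneg (hE : Continuous E) (hEpos : ∀ t, 0 < E t) (N : ℕ) : 0 ≤ bet b E N := by
  rw [bet]
  have := mu_pos b E hE hEpos N
  positivity

lemma bet_summable (hE : Continuous E) (hEpos : ∀ t, 0 < E t) : Summable (bet b E) := by
  apply Summable.of_nonneg_of_le (bet_nonneg b E hE hEpos)
    (f := fun N => (1/2:ℝ)^N * (mu b E 0 / 8))
  · intro N
    rw [bet]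
    have h1 := mu_anti b E hE hEpos (Nat.zero_le N)
    have h2 : (0:ℝ) ≤ (1/2:ℝ)^N := by positivity
    calc (1/2:ℝ)^N * mu b E N / 8 ≤ (1/2:ℝ)^N * mu b E 0 / 8 := by
          have h3 : (1/2:ℝ)^N * mu b E N ≤ (1/2:ℝ)^N * mu b E 0 :=
            mul_le_mul_of_nonneg_left h1 h2
          linarith
    _ = (1/2:ℝ)^N * (mu b E 0 / 8) := by ring
  · exact (summable_geometric_of_lt_one (by norm_num) (by norm_num)).mul_right _

/-- the approximating function -/
def yFn : ℝ → ℝ := fun t => ∑' N, uN b Z E hZ hE hEpos N t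
/-- its complex counterpart -/
def YFn : ℂ → ℂ := fun z => ∑' N, UCf b Z E hZ hE hEpos N z

lemma approx (hZ0 : ∀ t ≤ b - 2, Z t = 0) (t : ℝ) (ht : b - 2 ≤ t) :
    |yFn b Z E hZ hE hEpos t - Z t| < E t := by
  set N := ⌊t - (b-2)⌋₊ with hNdef
  have h0 : (0:ℝ) ≤ t - (b-2) := by linarith
  have hN1 : (N:ℝ) ≤ t - (b-2) := Nat.floor_le h0
  have hN2 : t - (b-2) < N + 1 := Nat.lt_floor_add_one _
  have htlow : tP b N ≤ t := by rw [tP]; linarith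
  have hthigh : t ≤ tP b N + 1 := by rw [tP]; linarith
  have hfar : ∀ k, |uN b Z E hZ hE hEpos (k+(N+2)) t| ≤ bet b E (k+(N+2)) := by
    intro k
    apply u_small b Z E hZ hE hEpos _ t ht
    rw [tP]
    push_cast
    rw [tP] at hthigh
    linarith [Nat.cast_nonneg (α := ℝ) k]
  have hbetsum : Summable (fun k => bet b E (k+(N+2))) :=
    (summable_nat_add_iff (N+2)).mpr (bet_summable b E hE hEpos)
  have habs : Summable (fun k => |uN b Z E hZ hE hEpos (k+(N+2)) t|) :=
    Summable.of_nonneg_of_le (fun k => abs_nonneg _) hfar hbetsum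
  have hsum2 : Summable (fun k => uN b Z E hZ hE hEpos (k+(N+2)) t) := habs.of_abs
  have hsum : Summable (fun k => uN b Z E hZ hE hEpos k t) :=
    (summable_nat_add_iff (N+2)).mp hsum2
  have hsplit : ∑ k ∈ Finset.range (N+2), uN b Z E hZ hE hEpos k t +
      ∑' k, uN b Z E hZ hE hEpos (k+(N+2)) t = ∑' k, uN b Z E hZ hE hEpos k t :=
    Summable.sum_add_tsum_nat_add (N+2) hsum
  have hSS : SSf b Z E hZ hE hEpos (N+2) t = ∑ k ∈ Finset.range (N+2),
      uN b Z E hZ hE hEpos k t := SSf_eq_sum b Z E hZ hE hEpos (N+2) t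
  have hB : |SSf b Z E hZ hE hEpos (N+2) t - Z t| ≤ mu b E (N+1) * (3/16) := by
    apply invB b Z E hZ hE hEpos (N+1) hZ0 t
    rw [tP_succ]
    constructor <;> [linarith; linarith]
  have hgeo : Summable (fun k => (1/2:ℝ)^k * (mu b E (N+1) / 32)) :=
    (summable_geometric_of_lt_one (by norm_num) (by norm_num)).mul_right _
  have hterm : ∀ k, bet b E (k+(N+2)) ≤ (1/2:ℝ)^k * (mu b E (N+1) / 32) := by
    intro k
    rw [bet]
    have h1 : mu b E (k+(N+2)) ≤ mu b E (N+1) := mu_anti b E hE hEpos (by omega)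
    have h2 : ((1:ℝ)/2)^(k+(N+2)) = (1/2:ℝ)^k * (1/2:ℝ)^(N+2) := pow_add _ _ _
    have h3 : ((1:ℝ)/2)^(N+2) ≤ (1/2:ℝ)^2 :=
      pow_le_pow_of_le_one (by norm_num) (by norm_num) (by omega)
    have h4 : (0:ℝ) < mu b E (N+1) := mu_pos b E hE hEpos (N+1)
    have h5 : (0:ℝ) ≤ (1/2:ℝ)^k := by positivity
    have h6 : (0:ℝ) < mu b E (k+(N+2)) := mu_pos b E hE hEpos _
    calc (1/2:ℝ)^(k+(N+2)) * mu b E (k+(N+2)) / 8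
        ≤ ((1/2:ℝ)^k * (1/4)) * mu b E (N+1) / 8 := by
          apply div_le_div_of_nonneg_right ?_ (by norm_num)
          apply mul_le_mul ?_ h1 h6.le (by positivity)
          rw [h2]
          apply mul_le_mul_of_nonneg_left ?_ h5
          calc ((1:ℝ)/2)^(N+2) ≤ (1/2:ℝ)^2 := h3
          _ = 1/4 := by norm_num
    _ = (1/2:ℝ)^k * (mu b E (N+1) / 32) := by ring
  have htail : |∑' k, uN b Z E hZ hE hEpos (k+(N+2)) t| ≤ mu b E (N+1) / 16 := by
    have habs' : Summable (fun k => ‖uN b Z E hZ hE hEpos (k+(N+2)) t‖) := by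
      simpa [Real.norm_eq_abs] using habs
    have h1 : ‖∑' k, uN b Z E hZ hE hEpos (k+(N+2)) t‖ ≤
        ∑' k, ‖uN b Z E hZ hE hEpos (k+(N+2)) t‖ := norm_tsum_le_tsum_norm habs'
    rw [Real.norm_eq_abs] at h1
    refine le_trans h1 ?_
    have h2 : ∑' k, ‖uN b Z E hZ hE hEpos (k+(N+2)) t‖ ≤
        ∑' k, (1/2:ℝ)^k * (mu b E (N+1) / 32) := by
      apply Summable.tsum_le_tsum ?_ habs' hgeo
      intro k
      rw [Real.norm_eq_abs]
      exact le_trans (hfar k) (hterm k)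
    refine le_trans h2 ?_
    rw [tsum_mul_right, tsum_geometric_two]
    linarith [mu_pos b E hE hEpos (N+1)]
  have hident : yFn b Z E hZ hE hEpos t - Z t = (SSf b Z E hZ hE hEpos (N+2) t - Z t) +
      ∑' k, uN b Z E hZ hE hEpos (k+(N+2)) t := by
    rw [yFn, ← hsplit, hSS]
    ring
  have hEt : mu b E (N+1) ≤ E t := by
    apply mu_le b E hE hEpos (N+1)
    constructor
    · linarith
    · push_cast
      rw [tP] at hthigh
      linarith
  have hmupos : 0 < mu b E (N+1) := mu_pos b E hE hEpos (N+1)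
  calc |yFn b Z E hZ hE hEpos t - Z t|
      ≤ |SSf b Z E hZ hE hEpos (N+2) t - Z t| +
        |∑' k, uN b Z E hZ hE hEpos (k+(N+2)) t| := by rw [hident]; exact abs_add_le _ _
  _ ≤ mu b E (N+1) * (3/16) + mu b E (N+1) / 16 := add_le_add hB htail
  _ < mu b E (N+1) := by linarith
  _ ≤ E t := hEt

lemma kN_pos (N : ℕ) : 0 < kN b Z E hZ hE hEpos N := by
  linarith [kN_one b Z E hZ hE hEpos N]

lemma uN_summable (t : ℝ) (ht : b - 2 ≤ t) :
    Summable (fun k => uN b Z E hZ hE hEpos k t) := by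
  set Kt := ⌈t - b + 4⌉₊ with hKt
  have hfar : ∀ k, |uN b Z E hZ hE hEpos (k+Kt) t| ≤ bet b E (k+Kt) := by
    intro k
    apply u_small b Z E hZ hE hEpos _ t ht
    have h1 : t - b + 4 ≤ (Kt : ℝ) := Nat.le_ceil _
    rw [tP]
    push_cast
    linarith [Nat.cast_nonneg (α := ℝ) k]
  have hbetsum : Summable (fun k => bet b E (k+Kt)) :=
    (summable_nat_add_iff Kt).mpr (bet_summable b E hE hEpos)
  have habs : Summable (fun k => |uN b Z E hZ hE hEpos (k+Kt) t|) :=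
    Summable.of_nonneg_of_le (fun k => abs_nonneg _) hfar hbetsum
  exact (summable_nat_add_iff Kt).mp habs.of_abs

lemma yFn_ofReal (t : ℝ) (ht : b - 2 ≤ t) :
    YFn b Z E hZ hE hEpos (t : ℂ) = ((yFn b Z E hZ hE hEpos t : ℝ) : ℂ) := by
  have hsum := uN_summable b Z E hZ hE hEpos t ht
  have h1 : YFn b Z E hZ hE hEpos (t : ℂ)
      = ∑' k, ((uN b Z E hZ hE hEpos k t : ℝ) : ℂ) := by
    rw [YFn]
    congr 1
    funext k
    exact UCf_ofReal b Z E hZ hE hEpos k t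
  rw [h1, yFn]
  exact (Complex.ofRealCLM.map_tsum hsum).symm

lemma yFn_analyticAt (x : ℝ) (hx : b - 1 < x) :
    AnalyticAt ℝ (yFn b Z E hZ hE hEpos) x := by
  have hπ : (0:ℝ) < Real.pi := Real.pi_pos
  set K := ⌈x - b + 5⌉₊ + 1 with hKdef
  have hK5 : x - b + 5 ≤ K := by
    have := Nat.le_ceil (x - b + 5)
    rw [hKdef]
    push_cast
    linarith
  have hKne : (Finset.range K).Nonempty := Finset.nonempty_range_iff.mpr (by omega)
  set r0 := (Finset.range K).inf' hKne
      (fun k => Real.pi / (2 * kN b Z E hZ hE hEpos k)) with hr0def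
  have hr0pos : 0 < r0 := by
    rw [hr0def, Finset.lt_inf'_iff]
    intro k _
    have := kN_pos b Z E hZ hE hEpos k
    positivity
  set r := min (1/4 : ℝ) r0 with hrdef
  have hr : 0 < r := lt_min (by norm_num) hr0pos
  set B := Metric.ball (x:ℂ) r with hBdef
  have hmem : ∀ z ∈ B, |z.im| < r ∧ |z.re - x| < r := by
    intro z hz
    rw [hBdef, Metric.mem_ball, dist_eq_norm] at hz
    constructor
    · have h1 : (z - (x:ℂ)).im = z.im := by simp
      calc |z.im| = |(z - (x:ℂ)).im| := by rw [h1]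
      _ ≤ ‖z - (x:ℂ)‖ := Complex.abs_im_le_norm _
      _ < r := hz
    · have h1 : (z - (x:ℂ)).re = z.re - x := by simp
      calc |z.re - x| = |(z - (x:ℂ)).re| := by rw [h1]
      _ ≤ ‖z - (x:ℂ)‖ := Complex.abs_re_le_norm _
      _ < r := hz
  have hcfar : ∀ k, K ≤ k → x + 5/2 ≤ cP b k := by
    intro k hk
    rw [cP, tP]
    have : (K:ℝ) ≤ k := Nat.cast_le.mpr hk
    linarith
  have hden : ∀ k, ∀ z ∈ B, 1 + Complex.exp
      (-(kN b Z E hZ hE hEpos k * (z - (cP b k : ℝ)))) ≠ 0 := by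
    intro k z hz
    obtain ⟨him, hre⟩ := hmem z hz
    by_cases hk : k < K
    · apply denC_ne_zero_of_im (kN_pos b Z E hZ hE hEpos k)
      have h1 : r0 ≤ Real.pi / (2 * kN b Z E hZ hE hEpos k) :=
        Finset.inf'_le _ (Finset.mem_range.mpr hk)
      have h2 : Real.pi / (2 * kN b Z E hZ hE hEpos k) < Real.pi / kN b Z E hZ hE hEpos k := by
        have hκ := kN_pos b Z E hZ hE hEpos k
        apply div_lt_div_of_pos_left hπ hκ
        linarith
      calc |z.im| < r := him
      _ ≤ r0 := min_le_right _ _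
      _ < Real.pi / kN b Z E hZ hE hEpos k := lt_of_le_of_lt h1 h2
    · apply denC_ne_zero_of_re (kN_pos b Z E hZ hE hEpos k)
      have h1 : x + 5/2 ≤ cP b k := hcfar k (le_of_not_gt hk)
      have h2 : r ≤ 1/4 := min_le_left _ _
      have := abs_lt.mp hre
      linarith [this.2]
  have hUdiff : ∀ k, DifferentiableOn ℂ (UCf b Z E hZ hE hEpos k) B := by
    intro k
    intro z hz
    exact (UC_diffAt _ _ _ (hden k z hz)).differentiableWithinAt
  have hfarC : ∀ k, ∀ z ∈ B, ‖UCf b Z E hZ hE hEpos (k+K) z‖ ≤ bet b E (k+K) := by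
    intro k z hz
    obtain ⟨him, hre⟩ := hmem z hz
    obtain ⟨_, _, _, hs4⟩ := st_spec b Z E hZ hE hEpos (k+K)
    have h2 : r ≤ 1/4 := min_le_left _ _
    have h3 := abs_lt.mp hre
    apply hs4
    · linarith [h3.1]
    · have h4 : x + 5/2 ≤ cP b (k+K) := by
        apply hcfar
        omega
      rw [cP] at h4
      linarith [h3.2]
    · linarith [abs_lt.mp him, him]
  have hbetsumK : Summable (fun k => bet b E (k+K)) :=
    (summable_nat_add_iff K).mpr (bet_summable b E hE hEpos)
  have hTU := tendstoUniformlyOn_tsum hbetsumK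
      (f := fun k z => UCf b Z E hZ hE hEpos (k+K) z) (s := B) (fun k z hz => hfarC k z hz)
  have hTail : DifferentiableOn ℂ (fun z => ∑' k, UCf b Z E hZ hE hEpos (k+K) z) B := by
    apply hTU.tendstoLocallyUniformlyOn.differentiableOn ?_ Metric.isOpen_ball
    apply Eventually.of_forall
    intro s
    apply DifferentiableOn.fun_sum
    intro i _
    exact hUdiff (i+K)
  have hHead : DifferentiableOn ℂ
      (fun z => ∑ k ∈ Finset.range K, UCf b Z E hZ hE hEpos k z) B := by
    apply DifferentiableOn.fun_sum
    intro i _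
    exact hUdiff i
  have hYeq : ∀ z ∈ B, YFn b Z E hZ hE hEpos z =
      (∑ k ∈ Finset.range K, UCf b Z E hZ hE hEpos k z) +
        ∑' k, UCf b Z E hZ hE hEpos (k+K) z := by
    intro z hz
    have hnorm : Summable (fun k => ‖UCf b Z E hZ hE hEpos (k+K) z‖) :=
      Summable.of_nonneg_of_le (fun k => norm_nonneg _) (fun k => hfarC k z hz) hbetsumK
    have hsum : Summable (fun k => UCf b Z E hZ hE hEpos k z) :=
      (summable_nat_add_iff K).mp hnorm.of_norm
    rw [YFn]
    exact (Summable.sum_add_tsum_nat_add K hsum).symm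
  have hYdiff : DifferentiableOn ℂ (YFn b Z E hZ hE hEpos) B :=
    (hHead.add hTail).congr hYeq
  have hYan : AnalyticAt ℂ (YFn b Z E hZ hE hEpos) (x:ℂ) :=
    hYdiff.analyticAt (Metric.isOpen_ball.mem_nhds (Metric.mem_ball_self hr))
  have h1 : AnalyticAt ℝ (YFn b Z E hZ hE hEpos) (x:ℂ) := hYan.restrictScalars
  have h2 : AnalyticAt ℝ (fun t : ℝ => YFn b Z E hZ hE hEpos (t:ℂ)) x :=
    h1.comp (Complex.ofRealCLM.analyticAt x)
  have h3 : AnalyticAt ℝ (fun t : ℝ => (YFn b Z E hZ hE hEpos (t:ℂ)).re) x :=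
    (Complex.reCLM.analyticAt _).comp h2
  apply h3.congr
  have hopen : Ioi (b - 3/2) ∈ nhds x := isOpen_Ioi.mem_nhds (by simp; linarith)
  apply Filter.eventuallyEq_of_mem hopen
  intro s hs
  have hs2 : b - 2 ≤ s := by
    have : b - 3/2 < s := hs
    linarith
  show (YFn b Z E hZ hE hEpos (s:ℂ)).re = yFn b Z E hZ hE hEpos s
  rw [yFn_ofReal b Z E hZ hE hEpos s hs2]
  simp

omit hZ hE hEpos in
/-- Carleman-type approximation on a half line. -/
theorem carleman_main (hZ : Continuous Z) (hE : Continuous E) (hEpos : ∀ t, 0 < E t)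
    (hZ0 : ∀ t ≤ b - 2, Z t = 0) :
    ∃ y : ℝ → ℝ, AnalyticOnNhd ℝ y (Ioi (b-1)) ∧ ∀ t, b - 2 ≤ t → |y t - Z t| < E t := by
  refine ⟨yFn b Z E hZ hE hEpos, ?_, ?_⟩
  · intro x hx
    exact yFn_analyticAt b Z E hZ hE hEpos x hx
  · intro t ht
    exact approx b Z E hZ hE hEpos hZ0 t ht

end CarlemanAux

theorem exists_analytic_between (b : ℝ) (f g : ℝ → ℝ)
    (hf : ContinuousOn f (Set.Ici b)) (hg : ContinuousOn g (Set.Ici b))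
    (hfg : ∀ t ∈ Set.Ici b, f t < g t) :
    ∃ (y : ℝ → ℝ) (U : Set ℝ), IsOpen U ∧ Set.Ici b ⊆ U ∧ AnalyticOnNhd ℝ y U ∧
      ∀ t ∈ Set.Ici b, f t < y t ∧ y t < g t := by
  classical
  set ramp : ℝ → ℝ := fun t => min 1 (max ((t - (b-2))/2) 0) with hrampdef
  have hrampc : Continuous ramp := by
    apply Continuous.min continuous_const
    apply Continuous.max (by fun_prop) continuous_const
  have hmaxb : Continuous (fun t : ℝ => max t b) := continuous_id.max continuous_const
  have hmaxmem : ∀ t : ℝ, max t b ∈ Set.Ici b := fun t => le_max_right t b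
  set mid : ℝ → ℝ := fun t => (f t + g t)/2 with hmiddef
  have hmidc : ContinuousOn mid (Set.Ici b) := (hf.add hg).div_const 2
  set Z : ℝ → ℝ := fun t => ramp t * mid (max t b) with hZdef
  set E : ℝ → ℝ := fun t => (g (max t b) - f (max t b))/2 with hEdef
  have hZc : Continuous Z := by
    apply hrampc.mul
    exact hmidc.comp_continuous hmaxb hmaxmem
  have hEc : Continuous E := by
    apply Continuous.div_const
    apply Continuous.sub
    · exact hg.comp_continuous hmaxb hmaxmem
    · exact hf.comp_continuous hmaxb hmaxmem
  have hEpos : ∀ t, 0 < E t := by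
    intro t
    have := hfg (max t b) (hmaxmem t)
    rw [hEdef]
    simp only
    linarith
  have hZ0 : ∀ t ≤ b - 2, Z t = 0 := by
    intro t ht
    rw [hZdef]
    simp only
    have h1 : ramp t = 0 := by
      rw [hrampdef]
      simp only
      rw [max_eq_right (by linarith : (t - (b-2))/2 ≤ 0)]
      simp
    rw [h1, zero_mul]
  obtain ⟨y, han, happ⟩ := carleman_main b Z E hZc hEc hEpos hZ0
  refine ⟨y, Set.Ioi (b-1), isOpen_Ioi, ?_, han, ?_⟩
  · intro t ht
    have : b ≤ t := ht
    simp only [Set.mem_Ioi]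
    linarith
  · intro t ht
    have htb : b ≤ t := ht
    have h1 := happ t (by linarith)
    have h2 : max t b = t := max_eq_left htb
    have h3 : ramp t = 1 := by
      rw [hrampdef]
      simp only
      rw [max_eq_left (by linarith : (0:ℝ) ≤ (t - (b-2))/2)]
      exact min_eq_left (by linarith)
    have h4 : Z t = (f t + g t)/2 := by
      rw [hZdef]
      simp only
      rw [h3, h2, one_mul, hmiddef]
    have h5 : E t = (g t - f t)/2 := by
      rw [hEdef]
      simp only
      rw [h2]
    rw [h4, h5] at h1
    have h6 := abs_lt.mp h1
    constructor <;> [linarith [h6.1]; linarith [h6.2]]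
end

section
/- Let Γ be a nontrivial ordered abelian group and [Γ] its ordered set of archimedean classes. If [Γ] has no largest element then cf(Γ) = cf([Γ]); if [Γ] has a largest element then cf(Γ) = ω. -/
open Cardinal

/-- The cofinality of a relation, as `Order.cof r` was defined in the older Mathlib. -/
noncomputable def relCof {α : Type*} (r : α → α → Prop) : Cardinal :=
  sInf { c | ∃ S : Set α, (∀ a, ∃ b ∈ S, r a b) ∧ Cardinal.mk S = c }

/-- `[a] ≤ [b]` for the archimedean classes of an ordered abelian group:
`|a| ≤ n|b|` for some `n ≥ 1`. -/
def archLE {Γ : Type*} [AddCommGroup Γ] [LinearOrder Γ] [IsOrderedAddMonoid Γ] (a b : Γ) : Prop :=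
  ∃ n : ℕ, 1 ≤ n ∧ |a| ≤ n • |b|

lemma relCof_le {α : Type*} (r : α → α → Prop) {S : Set α} (h : ∀ a, ∃ b ∈ S, r a b) :
    relCof r ≤ #S :=
  csInf_le' ⟨S, h, rfl⟩

lemma le_relCof {α : Type*} {r : α → α → Prop} (hr : ∀ a, r a a) {c : Cardinal} :
    c ≤ relCof r ↔ ∀ S : Set α, (∀ a, ∃ b ∈ S, r a b) → c ≤ #S := by
  constructor
  · intro h S hS
    exact le_trans h (relCof_le r hS)
  · intro h
    refine le_csInf ⟨#(Set.univ : Set α), Set.univ, fun a => ⟨a, trivial, hr a⟩, rfl⟩ ?_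
    rintro _ ⟨S, hS, rfl⟩
    exact h S hS

lemma archLE_refl {Γ : Type*} [AddCommGroup Γ] [LinearOrder Γ] [IsOrderedAddMonoid Γ] (a : Γ) : archLE a a :=
  ⟨1, le_refl _, by simp⟩

/-- Let `Γ` be a nontrivial ordered abelian group. If the ordered set `[Γ]` of archimedean
classes has no largest element then `cf(Γ) = cf([Γ])`; if it has a largest element then
`cf(Γ) = ω`. Cofinalities are expressed via `Order.cof` (for `[Γ]`, via the total
preorder `archLE` on representatives, which has the same cofinal subsets). -/
theorem cof_of_archClasses {Γ : Type*} [AddCommGroup Γ] [LinearOrder Γ] [IsOrderedAddMonoid Γ] (hnt : ∃ γ : Γ, γ ≠ 0) :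
    ((¬ ∃ a : Γ, ∀ b : Γ, archLE b a) →
        relCof ((· ≤ ·) : Γ → Γ → Prop) = relCof (archLE : Γ → Γ → Prop)) ∧
    ((∃ a : Γ, ∀ b : Γ, archLE b a) →
        relCof ((· ≤ ·) : Γ → Γ → Prop) = Cardinal.aleph0) := by
  obtain ⟨γ₀, hγ₀⟩ := hnt
  have hγ₀pos : 0 < |γ₀| := abs_pos.2 hγ₀
  constructor
  · intro hnl
    apply le_antisymm
    · -- cof(≤) ≤ cof(archLE)
      rw [le_relCof archLE_refl]
      intro S hS
      calc relCof ((· ≤ ·) : Γ → Γ → Prop) ≤ #(abs '' S) := by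
            apply relCof_le
            intro a
            obtain ⟨b, hb⟩ : ∃ b : Γ, ¬ archLE b a := by
              by_contra h
              push_neg at h
              exact hnl ⟨a, h⟩
            obtain ⟨s, hsS, m, hm1, hms⟩ := hS b
            refine ⟨|s|, Set.mem_image_of_mem _ hsS, ?_⟩
            have h1 : m • |a| < |b| := by
              by_contra h
              exact hb ⟨m, hm1, le_of_not_gt h⟩
            have h2 : m • |a| < m • |s| := lt_of_lt_of_le h1 hms
            have h3 : |a| < |s| := by
              by_contra h
              exact absurd (nsmul_le_nsmul_right (le_of_not_gt h) m) (not_le.2 h2)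
            exact le_of_lt (lt_of_le_of_lt (le_abs_self a) h3)
        _ ≤ #S := Cardinal.mk_image_le
    · -- cof(archLE) ≤ cof(≤)
      rw [le_relCof (fun a : Γ => le_refl a)]
      intro S hS
      apply relCof_le
      intro a
      obtain ⟨b, hbS, hab⟩ := hS |a|
      refine ⟨b, hbS, 1, le_refl _, ?_⟩
      have h0 : (0 : Γ) ≤ b := le_trans (abs_nonneg a) hab
      rw [one_smul, abs_of_nonneg h0]
      exact hab
  · intro ⟨a, ha⟩
    apply le_antisymm
    · -- cof ≤ ℵ₀ via the countable cofinal set {n • |a|}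
      have hcof : ∀ b : Γ, ∃ c ∈ Set.range (fun n : ℕ => n • |a|), b ≤ c := by
        intro b
        obtain ⟨n, _, hn⟩ := ha b
        exact ⟨n • |a|, ⟨n, rfl⟩, le_trans (le_abs_self b) hn⟩
      have := relCof_le ((· ≤ ·) : Γ → Γ → Prop) hcof
      refine le_trans this ?_
      have : (Set.range (fun n : ℕ => n • |a|)).Countable := Set.countable_range _
      have := this.to_subtype
      exact Cardinal.mk_le_aleph0
    · -- ℵ₀ ≤ cof: any cofinal set is infinite
      rw [le_relCof (fun a : Γ => le_refl a)]
      intro S hS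
      by_contra h
      have hfin : S.Finite := Cardinal.lt_aleph0_iff_set_finite.1 (not_le.1 h)
      have hne : S.Nonempty := by
        obtain ⟨b, hb, -⟩ := hS 0
        exact ⟨b, hb⟩
      obtain ⟨m, hmS, hmax⟩ := Set.Finite.exists_maximalFor id S hfin hne
      obtain ⟨b, hbS, hb⟩ := hS (m + |γ₀|)
      have h1 : b ≤ m := by
        rcases le_or_gt b m with h | h
        · exact h
        · exact (hmax hbS (le_of_lt h)).ge
      have h2 : m + |γ₀| ≤ m := le_trans hb h1
      exact absurd h2 (not_le.2 (lt_add_of_pos_right m hγ₀pos))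
end

section
/- Let Γ be an ordered abelian group and Δ ≠ {0} an ordered subgroup such that the quotient group Γ/Δ has rational rank at most ℵ₀ (i.e., ℚ ⊗ (Γ/Δ) has countable dimension over ℚ). Then cf(Γ) ≤ cf(Δ). -/
open Cardinal

section Aux

variable {Γ : Type*} [AddCommGroup Γ] [LinearOrder Γ] [IsOrderedAddMonoid Γ]

/-- The kernel of `M → ℚ ⊗ M` is torsion. -/
lemma aux_tensor_eq_zero_torsion {M : Type*} [AddCommGroup M] (m : M)
    (h : TensorProduct.mk ℤ ℚ M 1 m = 0) : ∃ k : ℤ, k ≠ 0 ∧ k • m = 0 := by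
  have : IsLocalizedModule (nonZeroDivisors ℤ) (TensorProduct.mk ℤ ℚ M 1) :=
    (isLocalizedModule_iff_isBaseChange (nonZeroDivisors ℤ) ℚ _).mpr
      (TensorProduct.isBaseChange ℤ M ℚ)
  obtain ⟨s, hs⟩ := (IsLocalizedModule.eq_zero_iff (nonZeroDivisors ℤ) _).mp h
  exact ⟨(s : ℤ), nonZeroDivisors.coe_ne_zero s, hs⟩

lemma aux_lt_add_self (Δ : AddSubgroup Γ) {γ₁ γ₂ : Γ} (h₂ : ∀ δ ∈ Δ, δ < γ₂)
    {n : ℕ} (hn : 0 < n) (hδ : n • (γ₁ - γ₂) ∈ Δ) : γ₁ < γ₂ + γ₂ := by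
  by_contra hge
  push_neg at hge
  have h0 : (0 : Γ) < γ₂ := h₂ 0 Δ.zero_mem
  have h1 : γ₂ ≤ γ₁ - γ₂ := le_sub_iff_add_le.mpr hge
  have h2 : γ₁ - γ₂ ≤ n • (γ₁ - γ₂) := by
    calc γ₁ - γ₂ = 1 • (γ₁ - γ₂) := (one_nsmul _).symm
    _ ≤ n • (γ₁ - γ₂) := nsmul_le_nsmul_left (le_trans h0.le h1) hn
  exact absurd (h₂ _ hδ) (not_lt.mpr (le_trans h1 h2))

lemma aux_aleph0_le_cof (Δ : AddSubgroup Γ) (hΔ : Δ ≠ ⊥) :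
    ℵ₀ ≤ Order.cof Δ := by
  obtain ⟨x, hxΔ, hx0⟩ : ∃ x : Γ, x ∈ Δ ∧ x ≠ 0 := by
    by_contra h
    push_neg at h
    exact hΔ (le_antisymm (fun y hy => by simpa using h y hy) bot_le)
  have habs : |x| ∈ Δ := by
    rcases abs_choice x with h | h
    · rw [h]; exact hxΔ
    · rw [h]; exact Δ.neg_mem hxΔ
  set d : Δ := ⟨|x|, habs⟩ with hd
  have hd0 : 0 < d := by
    rw [← Subtype.coe_lt_coe]
    exact abs_pos.mpr hx0
  rw [Order.le_cof_iff]
  intro S hS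
  rw [Cardinal.aleph0_le_mk_iff, Set.infinite_coe_iff]
  intro hfin
  have hne : S.Nonempty := by obtain ⟨b, hb, -⟩ := hS 0; exact ⟨b, hb⟩
  obtain ⟨a, haS, hamax⟩ := Set.Finite.exists_maximal hfin hne
  obtain ⟨b, hbS, hab⟩ := hS (a + d)
  have hlt : a < a + d := lt_add_of_pos_right a hd0
  have hab' : a = b := le_antisymm (le_trans hlt.le hab) (hamax hbS (le_trans hlt.le hab))
  rw [← hab'] at hab
  exact absurd hab (not_le.mpr hlt)

lemma aux_countable (V : Type*) [AddCommGroup V] [Module ℚ V]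
    (h : Module.rank ℚ V ≤ ℵ₀) : Countable V := by
  have : Countable (Module.Free.ChooseBasisIndex ℚ V) := by
    rw [← Cardinal.mk_le_aleph0_iff, ← Module.Free.rank_eq_card_chooseBasisIndex]
    exact h
  exact Countable.of_equiv _ (Module.Free.chooseBasis ℚ V).repr.toEquiv.symm

end Aux

/-- Let `Γ` be an ordered abelian group and `Δ ≠ {0}` a subgroup such that the quotient
`Γ/Δ` has rational rank at most `ℵ₀` (i.e. `ℚ ⊗ (Γ/Δ)` has countable dimension over `ℚ`).
Then `cf(Γ) ≤ cf(Δ)`. -/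
theorem cof_le_cof_of_ratRank_countable {Γ : Type*} [AddCommGroup Γ] [LinearOrder Γ] [IsOrderedAddMonoid Γ]
    (Δ : AddSubgroup Γ) (hΔ : Δ ≠ ⊥)
    (hrank : Module.rank ℚ (TensorProduct ℤ ℚ (Γ ⧸ Δ)) ≤ Cardinal.aleph0) :
    Order.cof Γ ≤ Order.cof Δ := by
  classical
  by_cases hcof : ∀ γ : Γ, ∃ δ : Δ, γ ≤ (δ : Γ)
  · -- Δ is cofinal in Γ
    have hne : {c | ∃ S : Set Δ, (∀ a, ∃ b ∈ S, a ≤ b) ∧ #S = c}.Nonempty :=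
      ⟨_, Set.univ, fun a => ⟨a, trivial, le_refl a⟩, rfl⟩
    obtain ⟨S, hS, hSc⟩ :
        ∃ S : Set Δ, (∀ a, ∃ b ∈ S, a ≤ b) ∧ #S = Order.cof Δ :=
      Order.exists_cof_eq Δ
    refine le_trans (Order.cof_le (s := (fun d : Δ => (d : Γ)) '' S) ?_) ?_
    · intro a
      obtain ⟨d, hd⟩ := hcof a
      obtain ⟨b, hbS, hb⟩ := hS d
      exact ⟨b, Set.mem_image_of_mem _ hbS, le_trans hd hb⟩
    · rw [← hSc]
      exact Cardinal.mk_image_le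
  · -- Δ is bounded in Γ
    push_neg at hcof
    obtain ⟨γ₀, hγ₀⟩ := hcof
    have hγ₀' : ∀ δ ∈ Δ, δ < γ₀ := fun δ hδ => hγ₀ ⟨δ, hδ⟩
    set V := TensorProduct ℤ ℚ (Γ ⧸ Δ) with hV
    have hVc : Countable V := aux_countable V hrank
    set g : Γ → V := fun γ => TensorProduct.mk ℤ ℚ (Γ ⧸ Δ) 1 (QuotientAddGroup.mk γ) with hg
    -- key comparison
    have key : ∀ γ₁ γ₂ : Γ, (∀ δ ∈ Δ, δ < γ₂) → g γ₁ = g γ₂ → γ₁ < γ₂ + γ₂ := by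
      intro γ₁ γ₂ h₂ hgg
      have h0 : TensorProduct.mk ℤ ℚ (Γ ⧸ Δ) 1
          ((QuotientAddGroup.mk γ₁ : Γ ⧸ Δ) - QuotientAddGroup.mk γ₂) = 0 := by
        rw [map_sub]
        exact sub_eq_zero.mpr hgg
      obtain ⟨k, hk0, hk⟩ := aux_tensor_eq_zero_torsion _ h0
      have hnat : (k.natAbs : ℤ) • ((QuotientAddGroup.mk γ₁ : Γ ⧸ Δ) - QuotientAddGroup.mk γ₂)
          = 0 := by
        rcases Int.natAbs_eq k with h | h
        · rw [← h, hk]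
        · rw [h, neg_smul, neg_eq_zero] at hk
          exact hk
      have hmem : k.natAbs • (γ₁ - γ₂) ∈ Δ := by
        rw [← QuotientAddGroup.eq_zero_iff]
        have h1 : ((QuotientAddGroup.mk (k.natAbs • (γ₁ - γ₂)) : Γ ⧸ Δ))
            = k.natAbs • (QuotientAddGroup.mk (γ₁ - γ₂) : Γ ⧸ Δ) :=
          QuotientAddGroup.mk_nsmul Δ _ _
        rw [h1, QuotientAddGroup.mk_sub, ← natCast_zsmul, hnat]
      exact aux_lt_add_self Δ h₂ (Int.natAbs_pos.mpr hk0) hmem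
    -- choice of representatives
    have hsec : ∀ v : V, ∃ γ : Γ,
        (∃ γ', (∀ δ ∈ Δ, δ < γ') ∧ g γ' = v) → ((∀ δ ∈ Δ, δ < γ) ∧ g γ = v) := by
      intro v
      by_cases h : ∃ γ', (∀ δ ∈ Δ, δ < γ') ∧ g γ' = v
      · obtain ⟨γ', h1, h2⟩ := h
        exact ⟨γ', fun _ => ⟨h1, h2⟩⟩
      · exact ⟨0, fun hh => absurd hh h⟩
    choose ch hch using hsec
    set T : Set Γ := insert γ₀ (Set.range fun v : V => ch v + ch v) with hT
    have hTcof : ∀ a : Γ, ∃ b ∈ T, a ≤ b := by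
      intro a
      by_cases ha : a ≤ γ₀
      · exact ⟨γ₀, Set.mem_insert _ _, ha⟩
      · have haU : ∀ δ ∈ Δ, δ < a := fun δ hδ => lt_trans (hγ₀' δ hδ) (not_le.mp ha)
        have hex : ∃ γ', (∀ δ ∈ Δ, δ < γ') ∧ g γ' = g a := ⟨a, haU, rfl⟩
        obtain ⟨hU, hgeq⟩ := hch (g a) hex
        refine ⟨ch (g a) + ch (g a), Set.mem_insert_of_mem _ ⟨g a, rfl⟩, ?_⟩
        exact (key a (ch (g a)) hU hgeq.symm).le
    refine le_trans (Order.cof_le hTcof) (le_trans ?_ (aux_aleph0_le_cof Δ hΔ))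
    exact Set.Countable.le_aleph0 ((Set.countable_range _).insert γ₀)
end

section
/- Let S be a short linearly ordered set and T an η₁-ordered set. Then any order embedding of a linearly ordered subset A of S into T extends to an order embedding of all of S into T. In particular, there exists an order embedding of S into T. -/
/-- A linear order is short if every subset has countable cofinality and countable
coinitiality. -/
def IsShortCof (S : Type*) [LinearOrder S] : Prop :=
  ∀ A : Set S, Order.cof A ≤ Cardinal.aleph0 ∧
    Order.cof (A)ᵒᵈ ≤ Cardinal.aleph0

/-- A linear order `T` is `η₁` if for all countable subsets `A < B` of `T` (possibly empty)
there is `t ∈ T` with `A < t < B`. -/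
def IsEtaOne (T : Type*) [LinearOrder T] : Prop :=
  ∀ A B : Set T, A.Countable → B.Countable → (∀ a ∈ A, ∀ b ∈ B, a < b) →
    ∃ t : T, (∀ a ∈ A, a < t) ∧ ∀ b ∈ B, t < b

lemma exists_countable_cofinal' {α : Type*} [Preorder α]
    (h : Order.cof α ≤ Cardinal.aleph0) :
    ∃ C : Set α, C.Countable ∧ ∀ a, ∃ b ∈ C, a ≤ b := by
  obtain ⟨C, hC, hcard⟩ := Order.exists_cof_eq α
  refine ⟨C, ?_, hC⟩
  rw [← Set.countable_coe_iff, ← Cardinal.mk_le_aleph0_iff]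
  exact hcard.le.trans h

/-- Any order embedding of a subset of a short linear order `S` into an `η₁`-ordered set `T`
extends to an order embedding of all of `S` into `T`; in particular `S` order-embeds
into `T`. -/
theorem embed_short_into_etaOne {S T : Type*} [LinearOrder S] [LinearOrder T]
    (hS : IsShortCof S) (hT : IsEtaOne T) :
    (∀ (A : Set S) (f : A ↪o T), ∃ g : S ↪o T, ∀ a : A, g a = f a) ∧
      Nonempty (S ↪o T) := by
  have main : ∀ (A : Set S) (f : A ↪o T), ∃ g : S ↪o T, ∀ a : A, g a = f a := by
    intro A f
    -- the collection of "good" graphs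
    set Pcoll : Set (Set (S × T)) :=
      {P | ∀ p ∈ P, ∀ q ∈ P, (p.1 ≤ q.1 ↔ p.2 ≤ q.2)} with hPcoll
    set G : Set (S × T) := {p | ∃ a : A, p = (↑a, f a)} with hG
    have hGmem : G ∈ Pcoll := by
      rintro p ⟨a, rfl⟩ q ⟨b, rfl⟩
      simp only [Prod.mk_le_mk, and_true, true_and]; exact (f.le_iff_le (a := a) (b := b)).symm
    -- chains have upper bounds
    have hchain : ∀ c ⊆ Pcoll, IsChain (· ⊆ ·) c → c.Nonempty →
        ∃ ub ∈ Pcoll, ∀ s ∈ c, s ⊆ ub := by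
      intro c hc hchain _
      refine ⟨⋃₀ c, ?_, fun s hs => Set.subset_sUnion_of_mem hs⟩
      rintro p ⟨P₁, hP₁, hp⟩ q ⟨P₂, hP₂, hq⟩
      rcases hchain.total hP₁ hP₂ with h | h
      · exact hc hP₂ p (h hp) q hq
      · exact hc hP₁ p hp q (h hq)
    obtain ⟨M, hGM, hMmem, hMmax⟩ := zorn_subset_nonempty Pcoll hchain G hGmem
    -- functionality of M
    have hfun : ∀ a t t', (a, t) ∈ M → (a, t') ∈ M → t = t' := by
      intro a t t' h1 h2
      exact le_antisymm ((hMmem _ h1 _ h2).mp le_rfl) ((hMmem _ h2 _ h1).mp le_rfl)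
    -- totality of M
    have htot : ∀ s : S, ∃ t : T, (s, t) ∈ M := by
      intro s
      by_contra hns
      push_neg at hns
      set Ls : Set S := {a | a < s ∧ ∃ t, (a, t) ∈ M} with hLs
      set Us : Set S := {a | s < a ∧ ∃ t, (a, t) ∈ M} with hUs
      obtain ⟨C, hCc, hCcof⟩ := exists_countable_cofinal'
        (α := Ls) (hS Ls).1
      obtain ⟨D, hDc, hDcoi⟩ := exists_countable_cofinal'
        (α := Usᵒᵈ) (hS Us).2
      have ψspec : ∀ a : Ls, ((a : S), a.2.2.choose) ∈ M := fun a => a.2.2.choose_spec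
      have τspec : ∀ a : Us, ((a : S), a.2.2.choose) ∈ M := fun a => a.2.2.choose_spec
      set ψ : Ls → T := fun a => a.2.2.choose with hψ
      set τ : Us → T := fun a => a.2.2.choose with hτ
      have hlt : ∀ x ∈ ψ '' C, ∀ y ∈ τ '' D, x < y := by
        rintro x ⟨c, _, rfl⟩ y ⟨d, _, rfl⟩
        have hcd : (c : S) < (d : S) := c.2.1.trans d.2.1
        have := (hMmem _ (τspec d) _ (ψspec c))
        exact lt_of_not_ge fun hle => absurd (this.mpr hle) (not_le.mpr hcd)
      obtain ⟨t, htl, htr⟩ := hT (ψ '' C) (τ '' D) (hCc.image ψ) (hDc.image τ) hlt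
      -- every element of M below s maps below t, above s above t
      have hbelow : ∀ p ∈ M, p.1 < s → p.2 < t := by
        intro p hp hps
        have hpL : p.1 ∈ Ls := ⟨hps, p.2, by simpa using hp⟩
        obtain ⟨c, hcC, hc⟩ := hCcof ⟨p.1, hpL⟩
        have h1 : p.2 ≤ ψ c := (hMmem _ hp _ (ψspec c)).mp hc
        exact h1.trans_lt (htl _ ⟨c, hcC, rfl⟩)
      have habove : ∀ p ∈ M, s < p.1 → t < p.2 := by
        intro p hp hps
        have hpU : p.1 ∈ Us := ⟨hps, p.2, by simpa using hp⟩
        obtain ⟨d, hdD, hd⟩ := hDcoi ⟨p.1, hpU⟩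
        have h1 : τ d ≤ p.2 := (hMmem _ (τspec d) _ hp).mp hd
        exact (htr _ ⟨d, hdD, rfl⟩).trans_le h1
      -- extended graph is good
      have hM' : insert (s, t) M ∈ Pcoll := by
        have key₁ : ∀ q ∈ M, ((s : S) ≤ q.1 ↔ t ≤ q.2) := by
          intro q hq
          constructor
          · intro h
            have hlt' : s < q.1 := h.lt_of_ne (fun he => hns q.2 (by rw [he]; simpa using hq))
            exact (habove q hq hlt').le
          · intro h
            by_contra hc
            exact absurd h (not_le.mpr (hbelow q hq (not_le.mp hc)))
        have key₂ : ∀ p ∈ M, (p.1 ≤ s ↔ p.2 ≤ t) := by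
          intro p hp
          constructor
          · intro h
            have hlt' : p.1 < s := h.lt_of_ne (fun he => hns p.2 (by rw [← he]; simpa using hp))
            exact (hbelow p hp hlt').le
          · intro h
            by_contra hc
            exact absurd h (not_le.mpr (habove p hp (not_le.mp hc)))
        rintro p (hp | hp) q (hq | hq)
        · simp [hp, hq]
        · rw [hp]; exact key₁ q hq
        · rw [hq]; exact key₂ p hp
        · exact hMmem p hp q hq
      have hsub := hMmax hM' (Set.subset_insert _ _)
      exact hns t (hsub (Set.mem_insert _ _))
    -- define the embedding
    set g : S → T := fun s => (htot s).choose with hg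
    have gspec : ∀ s, (s, g s) ∈ M := fun s => (htot s).choose_spec
    have gle : ∀ a b : S, g a ≤ g b ↔ a ≤ b :=
      fun a b => (hMmem _ (gspec a) _ (gspec b)).symm
    refine ⟨OrderEmbedding.ofMapLEIff g gle, fun a => ?_⟩
    have hfa : ((a : S), f a) ∈ M := hGM ⟨a, rfl⟩
    exact hfun _ _ _ (gspec (a : S)) hfa
  refine ⟨main, ?_⟩
  obtain ⟨g, -⟩ := main ∅ (OrderEmbedding.ofIsEmpty)
  exact ⟨g⟩
end

section
/- Every short linearly ordered set has cardinality at most the continuum 𝔠 = 2^{ℵ₀}. (Urysohn) -/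
open Filter Cardinal Set Hyperreal

attribute [local instance] Classical.propDecidable

namespace UrysohnAux

/-- Diagonal lemma: between countably many germs strictly below countably many germs
there is a germ. -/
lemma exists_seq_between (u v : ℕ → ℕ → ℝ)
    (h : ∀ n m, ofSeq (u n) < ofSeq (v m)) :
    ∃ g : ℕ → ℝ, ∀ n m, ofSeq (u n) < ofSeq g ∧ ofSeq g < ofSeq (v m) := by
  set F : Filter ℕ := (hyperfilter ℕ : Filter ℕ) with hF
  set I : ℕ → Set ℕ := fun N => {k | N ≤ k + 1 ∧ ∀ n < N, ∀ m < N, u n k < v m k} with hI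
  have hImem : ∀ N, ∀ᶠ k in F, k ∈ I N := by
    intro N
    have h1 : ∀ᶠ k in F, N ≤ k + 1 := by
      have : ∀ᶠ k in atTop, N ≤ k + 1 := by
        filter_upwards [eventually_ge_atTop N] with k hk; omega
      exact this.filter_mono Nat.hyperfilter_le_atTop
    have h2 : ∀ᶠ k in F, ∀ n < N, ∀ m < N, u n k < v m k := by
      have hfin : (Set.Iio N).Finite := Set.finite_Iio N
      rw [show (fun k => ∀ n < N, ∀ m < N, u n k < v m k)
          = fun k => ∀ n ∈ Set.Iio N, ∀ m ∈ Set.Iio N, u n k < v m k from rfl]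
      rw [hfin.eventually_all]
      intro n _
      rw [hfin.eventually_all]
      intro m _
      exact ofSeq_lt_ofSeq.1 (h n m)
    filter_upwards [h1, h2] with k hk1 hk2
    exact ⟨hk1, hk2⟩
  have hanti : ∀ N, I (N + 1) ⊆ I N := by
    intro N k hk
    obtain ⟨hk1, hk2⟩ := hk
    exact ⟨by omega, fun n hn m hm => hk2 n (by omega) m (by omega)⟩
  have hanti' : ∀ M N, M ≤ N → I N ⊆ I M := by
    intro M N hMN
    induction N with
    | zero => simp_all
    | succ N ih =>
      rcases Nat.lt_or_ge M (N+1) with h'|h'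
      · exact (hanti N).trans (ih (by omega))
      · have : M = N + 1 := by omega
        subst this; exact subset_rfl
  set Nk : ℕ → ℕ := fun k => Nat.findGreatest (fun N => k ∈ I N) (k + 1) with hNk
  set g : ℕ → ℝ := fun k =>
    if h : 0 < Nk k then
      (((Finset.range (Nk k)).sup' (by simpa using Finset.nonempty_range_iff.2 (by omega))
        fun n => u n k) +
       ((Finset.range (Nk k)).inf' (by simpa using Finset.nonempty_range_iff.2 (by omega))
        fun m => v m k)) / 2
    else 0 with hg
  refine ⟨g, fun n m => ?_⟩
  have key : ∀ k ∈ I (max n m + 1), u n k < g k ∧ g k < v m k := by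
    intro k hk
    have hNle : max n m + 1 ≤ k + 1 := hk.1
    have hge : max n m + 1 ≤ Nk k := Nat.le_findGreatest hNle hk
    have hpos : 0 < Nk k := by omega
    have hspec : k ∈ I (Nk k) := Nat.findGreatest_spec (P := fun N => k ∈ I N) hNle hk
    have hlt : ∀ n' < Nk k, ∀ m' < Nk k, u n' k < v m' k := hspec.2
    have hne : (Finset.range (Nk k)).Nonempty := Finset.nonempty_range_iff.2 (by omega)
    set a := (Finset.range (Nk k)).sup' hne fun n' => u n' k with ha
    set b := (Finset.range (Nk k)).inf' hne fun m' => v m' k with hb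
    have hab : a < b := by
      rw [ha, Finset.sup'_lt_iff]
      intro n' hn'
      rw [hb, Finset.lt_inf'_iff]
      intro m' hm'
      exact hlt n' (Finset.mem_range.1 hn') m' (Finset.mem_range.1 hm')
    have hgk : g k = (a + b) / 2 := by rw [hg]; simp only [hpos, dif_pos]; rfl
    have hua : u n k ≤ a :=
      Finset.le_sup' (fun n' => u n' k) (Finset.mem_range.2 (by omega))
    have hvb : b ≤ v m k :=
      Finset.inf'_le (fun m' => v m' k) (Finset.mem_range.2 (by omega))
    constructor
    · calc u n k ≤ a := hua
        _ < (a + b) / 2 := by linarith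
        _ = g k := hgk.symm
    · calc g k = (a + b) / 2 := hgk
        _ < b := by linarith
        _ ≤ v m k := hvb
  constructor
  · exact ofSeq_lt_ofSeq.2 <| by
      filter_upwards [hImem (max n m + 1)] with k hk using (key k hk).1
  · exact ofSeq_lt_ofSeq.2 <| by
      filter_upwards [hImem (max n m + 1)] with k hk using (key k hk).2

lemma exists_seq_above (u : ℕ → ℕ → ℝ) :
    ∃ x : ℝ*, ∀ n, ofSeq (u n) < x := by
  refine ⟨ofSeq (fun k => ((Finset.range (k + 1)).sup' (by simp) fun n => u n k) + 1),
    fun n => ofSeq_lt_ofSeq.2 ?_⟩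
  have : ∀ᶠ k in atTop, n ≤ k := eventually_ge_atTop n
  refine (this.mono fun k hk => ?_).filter_mono Nat.hyperfilter_le_atTop
  have : u n k ≤ (Finset.range (k + 1)).sup' (by simp) fun n' => u n' k :=
    Finset.le_sup' (fun n' => u n' k) (Finset.mem_range.2 (by omega : n < k + 1))
  linarith

lemma exists_seq_below (u : ℕ → ℕ → ℝ) :
    ∃ x : ℝ*, ∀ n, x < ofSeq (u n) := by
  refine ⟨ofSeq (fun k => ((Finset.range (k + 1)).inf' (by simp) fun n => u n k) - 1),
    fun n => ofSeq_lt_ofSeq.2 ?_⟩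
  have : ∀ᶠ k in atTop, n ≤ k := eventually_ge_atTop n
  refine (this.mono fun k hk => ?_).filter_mono Nat.hyperfilter_le_atTop
  have : (Finset.range (k + 1)).inf' (by simp) (fun n' => u n' k) ≤ u n k :=
    Finset.inf'_le (fun n' => u n' k) (Finset.mem_range.2 (by omega : n < k + 1))
  linarith

/-- The hyperreals are an `η₁`-ordered set. -/
lemma eta_one (A B : Set ℝ*) (hA : A.Countable) (hB : B.Countable)
    (hAB : ∀ a ∈ A, ∀ b ∈ B, a < b) :
    ∃ x : ℝ*, (∀ a ∈ A, a < x) ∧ ∀ b ∈ B, x < b := by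
  rcases A.eq_empty_or_nonempty with hAe | hAne
  · rcases B.eq_empty_or_nonempty with hBe | hBne
    · exact ⟨0, by simp [hAe], by simp [hBe]⟩
    · obtain ⟨β, hβ⟩ := hB.exists_eq_range hBne
      choose v hv using fun m => ofSeq_surjective (β m)
      obtain ⟨x, hx⟩ := exists_seq_below v
      refine ⟨x, by simp [hAe], fun b hb => ?_⟩
      rw [hβ] at hb
      obtain ⟨m, rfl⟩ := hb
      rw [← hv m]; exact hx m
  · obtain ⟨α, hα⟩ := hA.exists_eq_range hAne
    choose u hu using fun n => ofSeq_surjective (α n)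
    rcases B.eq_empty_or_nonempty with hBe | hBne
    · obtain ⟨x, hx⟩ := exists_seq_above u
      refine ⟨x, fun a ha => ?_, by simp [hBe]⟩
      rw [hα] at ha
      obtain ⟨n, rfl⟩ := ha
      rw [← hu n]; exact hx n
    · obtain ⟨β, hβ⟩ := hB.exists_eq_range hBne
      choose v hv using fun m => ofSeq_surjective (β m)
      have h : ∀ n m, ofSeq (u n) < ofSeq (v m) := by
        intro n m
        rw [hu n, hv m]
        exact hAB (α n) (hα ▸ Set.mem_range_self n) (β m) (hβ ▸ Set.mem_range_self m)
      obtain ⟨g, hg⟩ := exists_seq_between u v h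
      refine ⟨ofSeq g, fun a ha => ?_, fun b hb => ?_⟩
      · rw [hα] at ha; obtain ⟨n, rfl⟩ := ha
        rw [← hu n]; exact (hg n 0).1
      · rw [hβ] at hb; obtain ⟨m, rfl⟩ := hb
        rw [← hv m]; exact (hg 0 m).2

/-- If `ω₁` does not embed into `S`, every subset of `S` has a countable cofinal subset. -/
lemma exists_countable_cofinal {S : Type*} [LinearOrder S]
    (h : IsEmpty ((Cardinal.aleph.{0} 1).ord.ToType ↪o S)) (A : Set S) :
    ∃ C : Set S, C ⊆ A ∧ C.Countable ∧ ∀ a ∈ A, ∃ c ∈ C, a ≤ c := by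
  by_contra hcon
  push_neg at hcon
  -- every countable subset of A is strictly dominated by some element of A
  have hc : ∀ C : Set S, C ⊆ A → C.Countable → ∃ a ∈ A, ∀ c ∈ C, c < a := hcon
  obtain ⟨a0, ha0, -⟩ := hc ∅ (Set.empty_subset A) Set.countable_empty
  haveI : Nonempty S := ⟨a0⟩
  set O := (Cardinal.aleph.{0} 1).ord.ToType with hO
  have hIio : ∀ x : O, (Set.Iio x).Countable := by
    intro x
    have h1 : Cardinal.mk (Set.Iio x) < Cardinal.aleph 1 := Cardinal.mk_Iio_ord_toType x
    have heq : Cardinal.aleph.{0} 1 = Order.succ (Cardinal.aleph.{0} 0) := by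
      rw [← Cardinal.aleph_succ]; norm_num
    have h2 : Cardinal.mk (Set.Iio x) ≤ Cardinal.aleph 0 :=
      Order.lt_succ_iff.1 (lt_of_lt_of_eq h1 heq)
    have h3 : Cardinal.mk (Set.Iio x) ≤ Cardinal.aleph0 :=
      le_of_le_of_eq h2 Cardinal.aleph_zero
    exact Cardinal.le_aleph0_iff_set_countable.1 h3
  set Fx : (x : O) → ((y : O) → y < x → S) → S := fun x ih =>
    if h' : ∃ a ∈ A, ∀ (y : O) (hy : y < x), ih y hy < a then h'.choose
    else Classical.arbitrary S with hFx
  have wfO : WellFounded ((· < ·) : O → O → Prop) := wellFounded_lt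
  set g : O → S := wfO.fix Fx with hgdef
  have hgeq : ∀ x : O, g x = Fx x fun y _ => g y := fun x => wfO.fix_eq Fx x
  have key : ∀ x : O, g x ∈ A ∧ ∀ y : O, y < x → g y < g x := by
    intro x
    induction x using wfO.induction with
    | _ x IH =>
      have hC : (g '' Set.Iio x) ⊆ A := by
        rintro - ⟨y, hy, rfl⟩
        exact (IH y hy).1
      have hCc : (g '' Set.Iio x).Countable := (hIio x).image g
      obtain ⟨a, haA, ha⟩ := hc _ hC hCc
      have hex : ∃ a ∈ A, ∀ (y : O) (hy : y < x), g y < a :=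
        ⟨a, haA, fun y hy => ha _ (Set.mem_image_of_mem g hy)⟩
      have hgx : g x = hex.choose := by
        rw [hgeq x, hFx]
        simp only [dif_pos hex]
      obtain ⟨hA', hlt'⟩ := hex.choose_spec
      exact ⟨hgx ▸ hA', fun y hy => hgx ▸ hlt' y hy⟩
  have hmono : StrictMono g := fun y x hyx => (key x).2 y hyx
  exact h.elim (OrderEmbedding.ofStrictMono g hmono)

end UrysohnAux

/-- A linear order is short if neither `ω₁` nor its reverse order-embeds into it. -/
def IsShort (S : Type*) [LinearOrder S] : Prop :=
  IsEmpty ((Cardinal.aleph.{0} 1).ord.ToType ↪o S) ∧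
    IsEmpty ((Cardinal.aleph.{0} 1).ord.ToType ↪o Sᵒᵈ)

/-- (Urysohn) Every short linear order has cardinality at most the continuum. -/
theorem card_le_continuum_of_short {S : Type*} [LinearOrder S] (hS : IsShort S) :
    Cardinal.mk S ≤ Cardinal.continuum := by
  classical
  obtain ⟨h₁, h₂⟩ := hS
  set r : S → S → Prop := WellOrderingRel with hr
  have wfr : WellFounded r := IsWellFounded.wf
  have tri : ∀ x y : S, r x y ∨ x = y ∨ r y x := fun x y =>
    trichotomous_of r x y
  -- define the embedding into the hyperreals by transfinite recursion
  set F : (s : S) → ((t : S) → r t s → ℝ*) → ℝ* := fun s ih =>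
    if h' : ∃ x : ℝ*, (∀ (t : S) (ht : r t s), t < s → ih t ht < x) ∧
        (∀ (t : S) (ht : r t s), s < t → x < ih t ht) then h'.choose else 0
    with hF
  set f : S → ℝ* := wfr.fix F with hfdef
  have hfeq : ∀ s : S, f s = F s fun t _ => f t := fun s => wfr.fix_eq F s
  have key : ∀ s t : S, r t s → (t < s → f t < f s) ∧ (s < t → f s < f t) := by
    intro s
    induction s using wfr.induction with
    | _ s IH =>
      intro t ht
      -- monotonicity among predecessors of s
      have mono : ∀ t₁ t₂ : S, r t₁ s → r t₂ s → t₁ < t₂ → f t₁ < f t₂ := by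
        intro t₁ t₂ h1 h2 hlt
        rcases tri t₁ t₂ with h' | h' | h'
        · exact (IH t₂ h2 t₁ h').1 hlt
        · exact absurd h' (ne_of_lt hlt)
        · exact (IH t₁ h1 t₂ h').2 hlt
      set L : Set S := {u | r u s ∧ u < s} with hL
      set R : Set S := {u | r u s ∧ s < u} with hR
      obtain ⟨C, hCL, hCc, hCcof⟩ := UrysohnAux.exists_countable_cofinal h₁ L
      obtain ⟨D, hDR, hDc, hDcof⟩ :=
        UrysohnAux.exists_countable_cofinal (S := Sᵒᵈ) h₂ R
      have hAB : ∀ a ∈ f '' C, ∀ b ∈ f '' D, a < b := by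
        rintro - ⟨c, hc, rfl⟩ - ⟨d, hd, rfl⟩
        have hcL := hCL hc
        have hdR := hDR hd
        exact mono c d hcL.1 hdR.1 (lt_trans hcL.2 hdR.2)
      obtain ⟨x, hx1, hx2⟩ :=
        UrysohnAux.eta_one (f '' C) (f '' D) (hCc.image f) (hDc.image f) hAB
      have hex : ∃ x : ℝ*, (∀ (t : S) (ht : r t s), t < s → f t < x) ∧
          (∀ (t : S) (ht : r t s), s < t → x < f t) := by
        refine ⟨x, fun u hu hus => ?_, fun u hu hsu => ?_⟩
        · obtain ⟨c, hcC, huc⟩ := hCcof u ⟨hu, hus⟩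
          have : f u ≤ f c := by
            rcases eq_or_lt_of_le huc with rfl | h'
            · exact le_refl _
            · exact le_of_lt (mono u c hu (hCL hcC).1 h')
          exact lt_of_le_of_lt this (hx1 _ (Set.mem_image_of_mem f hcC))
        · obtain ⟨d, hdD, hdu⟩ := hDcof u ⟨hu, hsu⟩
          -- hdu is ≤ in the dual order, i.e. d ≤ u in S
          have hdu' : OrderDual.ofDual d ≤ OrderDual.ofDual u := hdu
          have : f d ≤ f u := by
            rcases eq_or_lt_of_le hdu' with heq | h'
            · exact le_of_eq (congrArg f heq)
            · exact le_of_lt (mono (OrderDual.ofDual d) (OrderDual.ofDual u)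
                (hDR hdD).1 hu h')
          exact lt_of_lt_of_le (hx2 _ (Set.mem_image_of_mem f hdD)) this
      have hfs : f s = hex.choose := by
        rw [hfeq s, hF]
        simp only [dif_pos hex]
      obtain ⟨hs1, hs2⟩ := hex.choose_spec
      exact ⟨fun hts => hfs ▸ hs1 t ht hts, fun hst => hfs ▸ hs2 t ht hst⟩
  have hmono : StrictMono f := by
    intro x y hxy
    rcases tri x y with h' | h' | h'
    · exact (key y x h').1 hxy
    · exact absurd h' (ne_of_lt hxy)
    · exact (key x y h').2 hxy
  have h2 : Cardinal.mk ℝ* ≤ Cardinal.continuum := by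
    have hq : Cardinal.mk ℝ* ≤ Cardinal.mk (ℕ → ℝ) :=
      Cardinal.mk_le_of_surjective ofSeq_surjective
    have h3 : Cardinal.mk (ℕ → ℝ) = Cardinal.continuum := by
      rw [Cardinal.mk_arrow, Cardinal.lift_uzero, Cardinal.lift_uzero, Cardinal.mk_real]
      simp only [Cardinal.mk_denumerable]
      exact Cardinal.continuum_power_aleph0
    exact hq.trans_eq h3
  have h1 := Cardinal.lift_mk_le'.2 ⟨⟨f, hmono.injective⟩⟩
  rw [Cardinal.lift_uzero] at h1
  exact h1.trans (Cardinal.lift_le_continuum.2 h2)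
end

section
/- Let S be a short linearly ordered set. Then the Hahn product H[S, ℝ] (the ordered abelian group of functions f : S → ℝ with well-ordered support, ordered lexicographically by the least element of the support) is a short linearly ordered set. (Esterle) -/
/-- A relation `r` on `α` is short if there is no `ω₁`-indexed strictly `r`-increasing
chain and no `ω₁`-indexed strictly `r`-decreasing chain in `α`. For a linear order with
`r = (· < ·)` this says neither `ω₁` nor its reverse order-embeds. -/
def RelShort {α : Type*} (r : α → α → Prop) : Prop :=
  (¬ ∃ f : (Cardinal.aleph.{0} 1).ord.ToType → α, ∀ i j, i < j → r (f i) (f j)) ∧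
    (¬ ∃ f : (Cardinal.aleph.{0} 1).ord.ToType → α, ∀ i j, i < j → r (f j) (f i))

/-- `f > 0` in the Hahn product `H[S, ℝ]`: `f ≠ 0` and the coefficient of `f` at the least
element of its support is positive. -/
def HahnPos {S : Type*} [LinearOrder S] (f : HahnSeries S ℝ) : Prop :=
  ∃ h : f ≠ 0, 0 < f.coeff (f.isWF_support.min (HahnSeries.support_nonempty_iff.2 h))


noncomputable section
open Cardinal Ordinal Set

namespace EsterleAux

abbrev I1 : Type := (Cardinal.aleph.{0} 1).ord.ToType

instance : NoMaxOrder I1 := Cardinal.noMaxOrder (by exact_mod_cast Cardinal.aleph0_le_aleph 1)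

theorem mk_I1 : #I1 = Cardinal.aleph 1 := by
  rw [Cardinal.mk_toType, Cardinal.card_ord]

/-- least element above `i` -/
def succI (i : I1) : I1 := (wellFounded_lt).min {j : I1 | i < j} (let ⟨j, hj⟩ := exists_gt i; ⟨j, hj⟩)

theorem lt_succI (i : I1) : i < succI i :=
  (wellFounded_lt).min_mem {j : I1 | i < j} _

theorem succI_le {i j : I1} (h : i < j) : succI i ≤ j :=
  WellFounded.min_le _ h

/-- ℝ is short: no strictly increasing ω₁-chain. -/
theorem real_no_inc (f : I1 → ℝ) (hf : ∀ i j : I1, i < j → f i < f j) : False := by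
  have hq : ∀ i : I1, ∃ q : ℚ, f i < (q : ℝ) ∧ (q : ℝ) < f (succI i) := by
    intro i
    exact exists_rat_btwn (hf i (succI i) (lt_succI i))
  choose q hq1 hq2 using hq
  have hmono : ∀ i j : I1, i < j → q i < q j := by
    intro i j hij
    have h1 : (q i : ℝ) < f j := by
      rcases eq_or_lt_of_le (succI_le hij) with h | h
      · rw [← h]; exact hq2 i
      · exact (hq2 i).trans (hf _ _ h)
    exact_mod_cast h1.trans (hq1 j)
  have hinj : Function.Injective q := by
    intro i j hij
    rcases lt_trichotomy i j with h | h | h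
    · exact absurd hij (ne_of_lt (hmono _ _ h))
    · exact h
    · exact absurd hij.symm (ne_of_lt (hmono _ _ h))
  have : #I1 ≤ #ℚ := Cardinal.mk_le_of_injective hinj
  rw [mk_I1, Cardinal.mkRat] at this
  exact absurd this (not_le.2 (by exact_mod_cast Cardinal.aleph0_lt_aleph_one))

end EsterleAux

namespace EsterleAux

/-- Eventual constancy of antitone maps when there is no strictly decreasing ω₁-chain. -/
theorem ec_anti {α : Type*} [LinearOrder α]
    (hno : ¬ ∃ f : I1 → α, ∀ i j : I1, i < j → f j < f i)
    (v : I1 → α) (hv : Antitone v) :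
    ∃ i₀ : I1, ∀ j, i₀ ≤ j → v j = v i₀ := by
  by_contra hc
  push_neg at hc
  have hdrop : ∀ i : I1, ∃ j, i < j ∧ v j < v i := by
    intro i
    obtain ⟨j, hij, hne⟩ := hc i
    have hle : v j ≤ v i := hv hij
    have hij' : i ≠ j := by rintro rfl; exact hne rfl
    exact ⟨j, lt_of_le_of_ne hij hij', lt_of_le_of_ne hle hne⟩
  apply hno
  -- the set of indices that are the least index attaining their value
  set R : Set I1 := {i : I1 | ∀ j, j < i → v i < v j} with hR
  have hRdec : ∀ i j : (R : Set I1), i < j → v (j : I1) < v (i : I1) := by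
    rintro ⟨i, hi⟩ ⟨j, hj⟩ hij
    exact hj i hij
  have hub : Set.Unbounded ((· < ·) : I1 → I1 → Prop) R := by
    intro i
    obtain ⟨j, hij, hvj⟩ := hdrop i
    have hne : {k : I1 | v k = v j}.Nonempty := ⟨j, rfl⟩
    set j₀ := wellFounded_lt.min {k : I1 | v k = v j} hne with hj₀
    have hj₀v : v j₀ = v j := wellFounded_lt.min_mem _ hne
    have hj₀R : j₀ ∈ R := by
      intro k hk
      have h1 : v k ≠ v j := fun h => wellFounded_lt.not_lt_min {k : I1 | v k = v j} h hk
      have h2 : v j₀ ≤ v k := hv hk.le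
      rw [hj₀v] at h2 ⊢
      exact lt_of_le_of_ne h2 (fun h => h1 h.symm)
    refine ⟨j₀, hj₀R, ?_⟩
    intro hlt
    have h2 := hv hlt.le
    rw [hj₀v] at h2
    exact absurd (hvj.trans_le h2) (lt_irrefl _)
  have wo1 : IsWellOrder I1 (· < ·) := isWellOrder_lt
  have woR : IsWellOrder (R : Set I1) (· < ·) := isWellOrder_lt
  have htype : @Ordinal.type I1 (· < ·) wo1 = (Cardinal.aleph.{0} 1).ord :=
    Ordinal.type_toType _
  have h1 : Cardinal.aleph 1 ≤ #R := by
    have := Order.cof_le (α := I1) (s := R) (fun x => let ⟨y, hy, hxy⟩ := hub x; ⟨y, hy, not_lt.1 hxy⟩)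
    rwa [Ordinal.cof_toType, Cardinal.isRegular_aleph_one.cof_eq] at this
  have h3 : @Ordinal.type I1 (· < ·) wo1 ≤ @Ordinal.type (R : Set I1) (· < ·) woR := by
    rw [htype]
    exact Cardinal.ord_le.2 (by rwa [Ordinal.card_type])
  obtain ⟨g⟩ := (@Ordinal.type_le_iff I1 (R : Set I1) (· < ·) (· < ·) wo1 woR).1 h3
  refine ⟨fun i => v ((g i : (R : Set I1)) : I1), fun i j hij => ?_⟩
  exact hRdec (g i) (g j) (g.map_rel_iff.2 hij)

/-- Eventual constancy of monotone maps when there is no strictly increasing ω₁-chain. -/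
theorem ec_mono {α : Type*} [LinearOrder α]
    (hno : ¬ ∃ f : I1 → α, ∀ i j : I1, i < j → f i < f j)
    (v : I1 → α) (hv : Monotone v) :
    ∃ i₀ : I1, ∀ j, i₀ ≤ j → v j = v i₀ := by
  have := ec_anti (α := αᵒᵈ)
    (by
      intro ⟨f, hf⟩
      exact hno ⟨fun i => OrderDual.ofDual (f i), fun i j h => hf i j h⟩)
    (fun i => OrderDual.toDual (v i)) (fun i j h => hv h)
  obtain ⟨i₀, h⟩ := this
  exact ⟨i₀, fun j hj => congrArg OrderDual.ofDual (h j hj)⟩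

end EsterleAux

namespace EsterleAux

section Hahn

variable {S : Type*} [LinearOrder S] [Nonempty S]

/-- The valuation (least element of the support), with junk value for `0`. -/
def val (f : HahnSeries S ℝ) : S :=
  letI := Classical.dec
  if h : f ≠ 0 then f.isWF_support.min (HahnSeries.support_nonempty_iff.2 h)
  else Classical.arbitrary S

theorem val_def {f : HahnSeries S ℝ} (h : f ≠ 0) :
    val f = f.isWF_support.min (HahnSeries.support_nonempty_iff.2 h) := dif_pos h

theorem coeff_val_ne {f : HahnSeries S ℝ} (h : f ≠ 0) : f.coeff (val f) ≠ 0 := by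
  rw [val_def h]
  exact f.isWF_support.min_mem _

theorem coeff_zero_of_lt_val {f : HahnSeries S ℝ} {t : S} (h : f ≠ 0) (ht : t < val f) :
    f.coeff t = 0 := by
  by_contra hne
  rw [val_def h] at ht
  exact f.isWF_support.not_lt_min _ ((f.mem_support t).2 hne) ht

theorem val_le_of_ne {f : HahnSeries S ℝ} {t : S} (h : f ≠ 0) (ht : f.coeff t ≠ 0) :
    val f ≤ t := by
  rw [val_def h]
  exact f.isWF_support.min_le _ ((f.mem_support t).2 ht)

theorem hahnPos_coeff {f : HahnSeries S ℝ} (h : HahnPos f) : 0 < f.coeff (val f) := by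
  obtain ⟨h0, hp⟩ := h
  rw [val_def h0]
  exact hp

theorem hahnPos_of_coeff {f : HahnSeries S ℝ} (h0 : f ≠ 0) (hp : 0 < f.coeff (val f)) :
    HahnPos f := ⟨h0, by rw [← val_def h0]; exact hp⟩

theorem hahnPos_add {f g : HahnSeries S ℝ} (hf : HahnPos f) (hg : HahnPos g) :
    HahnPos (f + g) ∧ val (f + g) = min (val f) (val g) := by
  set m := min (val f) (val g) with hm
  have hcoeff : ∀ h : HahnSeries S ℝ, HahnPos h → m ≤ val h → 0 ≤ h.coeff m := by
    intro h hh hle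
    rcases eq_or_lt_of_le hle with he | hlt
    · rw [he]; exact (hahnPos_coeff hh).le
    · rw [coeff_zero_of_lt_val hh.1 hlt]
  have hsum : 0 < (f + g).coeff m := by
    rw [HahnSeries.coeff_add]
    rcases le_total (val f) (val g) with h | h
    · have hmf : m = val f := min_eq_left h
      have h1 : 0 < f.coeff m := by rw [hmf]; exact hahnPos_coeff hf
      have h2 : 0 ≤ g.coeff m := hcoeff g hg (min_le_right _ _)
      linarith
    · have hmg : m = val g := min_eq_right h
      have h1 : 0 < g.coeff m := by rw [hmg]; exact hahnPos_coeff hg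
      have h2 : 0 ≤ f.coeff m := hcoeff f hf (min_le_left _ _)
      linarith
  have hne : f + g ≠ 0 := by
    intro h0
    rw [h0, HahnSeries.coeff_zero] at hsum
    exact lt_irrefl _ hsum
  have hzero : ∀ t, t < m → (f + g).coeff t = 0 := by
    intro t ht
    rw [HahnSeries.coeff_add,
      coeff_zero_of_lt_val hf.1 (ht.trans_le (min_le_left _ _)),
      coeff_zero_of_lt_val hg.1 (ht.trans_le (min_le_right _ _)), add_zero]
  have hval : val (f + g) = m := by
    refine le_antisymm (val_le_of_ne hne hsum.ne') (not_lt.1 fun h => ?_)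
    exact coeff_val_ne hne (hzero _ h)
  exact ⟨hahnPos_of_coeff hne (by rw [hval]; exact hsum), hval⟩

end Hahn

end EsterleAux


end

namespace EsterleAux

open Cardinal Ordinal Set

instance : Nonempty I1 :=
  Ordinal.toType_nonempty_iff_ne_zero.2
    (fun h => (Cardinal.aleph_pos 1).ne' (Cardinal.ord_eq_zero.1 h))

theorem no_inc {S : Type*} [LinearOrder S]
    (hS : RelShort ((· < ·) : S → S → Prop))
    (F : I1 → HahnSeries S ℝ) (hF : ∀ i j : I1, i < j → HahnPos (F j - F i)) : False := by
  -- S is nonempty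
  have i0 : I1 := Classical.arbitrary I1
  obtain ⟨i1, hi01⟩ := exists_gt i0
  haveI : Nonempty S := by
    obtain ⟨hne, -⟩ := hF i0 i1 hi01
    obtain ⟨s, -⟩ := HahnSeries.support_nonempty_iff.2 hne
    exact ⟨s⟩
  set v : I1 → I1 → S := fun i j => val (F j - F i) with hv
  have hmin : ∀ i j k : I1, i < j → j < k → v i k = min (v j k) (v i j) := by
    intro i j k hij hjk
    have h := (hahnPos_add (hF j k hjk) (hF i j hij)).2
    rwa [sub_add_sub_cancel] at h
  have hanti : ∀ i j k : I1, i < j → j < k → v i k ≤ v i j := by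
    intro i j k hij hjk
    rw [hmin i j k hij hjk]
    exact min_le_right _ _
  -- For every i, the valuation v i · stabilizes
  have hstep : ∀ i : I1, ∃ s : S, ∃ t : I1, i < t ∧ ∀ j, t ≤ j → v i j = s := by
    intro i
    set w : I1 → S := fun j => v i (max j (succI i)) with hw
    have hwa : Antitone w := by
      intro a b hab
      have h1 : max a (succI i) ≤ max b (succI i) := max_le_max hab le_rfl
      rcases eq_or_lt_of_le h1 with h | h
      · simp only [hw, h]; exact le_rfl
      · exact hanti i _ _ (lt_of_lt_of_le (lt_succI i) (le_max_right _ _)) h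
    obtain ⟨t₀, ht₀⟩ := ec_anti hS.2 w hwa
    refine ⟨w t₀, max t₀ (succI i), lt_of_lt_of_le (lt_succI i) (le_max_right _ _), ?_⟩
    intro j hj
    have h1 : max j (succI i) = j := max_eq_left (le_trans (le_max_right t₀ _) hj)
    have h2 := ht₀ j (le_trans (le_max_left _ _) hj)
    calc v i j = w j := by rw [hw]; simp only [h1]
    _ = w t₀ := h2
  choose sv tv htv1 htv2 using hstep
  -- sv is monotone, hence eventually constant
  have hsv : Monotone sv := by
    intro a b hab
    rcases eq_or_lt_of_le hab with rfl | hab'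
    · exact le_rfl
    · obtain ⟨c, hc⟩ := exists_gt (max (max (tv a) (tv b)) b)
      have h1 : v a c = sv a := htv2 a c ((le_max_left _ _).trans (le_max_left _ _) |>.trans hc.le)
      have h2 : v b c = sv b := htv2 b c ((le_max_right _ _).trans (le_max_left _ _) |>.trans hc.le)
      have h3 := hmin a b c hab' ((le_max_right _ _).trans_lt hc)
      rw [h1, h2] at h3
      rw [h3]
      exact min_le_left _ _
  obtain ⟨γ₀, hγ₀⟩ := ec_mono hS.1 sv hsv
  set s : S := sv γ₀ with hs
  -- all valuations beyond γ₀ are at least s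
  have hvges : ∀ a b : I1, γ₀ ≤ a → a < b → s ≤ v a b := by
    intro a b ha hab
    obtain ⟨c, hc⟩ := exists_gt (max (max (tv a) (tv b)) b)
    have h1 : v a c = sv a := htv2 a c ((le_max_left _ _).trans (le_max_left _ _) |>.trans hc.le)
    have h2 : v b c = sv b := htv2 b c ((le_max_right _ _).trans (le_max_left _ _) |>.trans hc.le)
    have h3 := hmin a b c hab ((le_max_right _ _).trans_lt hc)
    rw [h1, h2, hγ₀ a ha, hγ₀ b (ha.trans hab.le)] at h3
    exact h3.le.trans (min_le_right _ _)
  -- the coefficient at s is monotone, hence eventually constant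
  set C : I1 → ℝ := fun j => (F (max j γ₀)).coeff s with hC
  have hCm : Monotone C := by
    intro a b hab
    have h1 : max a γ₀ ≤ max b γ₀ := max_le_max hab le_rfl
    rcases eq_or_lt_of_le h1 with h | h
    · simp only [hC, h]; exact le_rfl
    · have hd := hvges (max a γ₀) (max b γ₀) (le_max_right _ _) h
      have hp := hF (max a γ₀) (max b γ₀) h
      have key : 0 ≤ (F (max b γ₀) - F (max a γ₀)).coeff s := by
        rcases eq_or_lt_of_le hd with he | hlt
        · rw [he]; exact (hahnPos_coeff hp).le
        · rw [coeff_zero_of_lt_val hp.1 hlt]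
      rw [HahnSeries.coeff_sub] at key
      simp only [hC]
      linarith
  have hnoR : ¬ ∃ f : I1 → ℝ, ∀ i j : I1, i < j → f i < f j := by
    rintro ⟨f, hf⟩
    exact real_no_inc f hf
  obtain ⟨γ₁, hγ₁⟩ := ec_mono hnoR C hCm
  -- final contradiction
  set a : I1 := max γ₁ γ₀ with ha
  obtain ⟨b, hb⟩ := exists_gt (max (tv a) a)
  have hab : a < b := (le_max_right _ _).trans_lt hb
  have h1 : v a b = sv a := htv2 a b ((le_max_left _ _).trans hb.le)
  have h2 : sv a = s := hγ₀ a (le_max_right _ _)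
  have hCa : C a = C γ₁ := hγ₁ a (le_max_left _ _)
  have hCb : C b = C γ₁ := hγ₁ b ((le_max_left _ _).trans hab.le)
  have hmaxa : max a γ₀ = a := max_eq_left (le_max_right γ₁ γ₀)
  have hmaxb : max b γ₀ = b := max_eq_left ((le_max_right γ₁ γ₀).trans hab.le)
  have hcoeff : (F b).coeff s = (F a).coeff s := by
    have := hCb.trans hCa.symm
    simpa only [hC, hmaxa, hmaxb] using this
  have hp := hF a b hab
  have hpos : 0 < (F b - F a).coeff (v a b) := hahnPos_coeff hp
  rw [h1, h2, HahnSeries.coeff_sub, hcoeff, _root_.sub_self] at hpos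
  exact lt_irrefl _ hpos

end EsterleAux

/-- (Esterle) If `S` is a short linear order, then the Hahn product `H[S, ℝ]`, ordered
lexicographically (`f < g` iff `g - f > 0`), is short. -/
theorem hahnProduct_short {S : Type*} [LinearOrder S]
    (hS : RelShort ((· < ·) : S → S → Prop)) :
    RelShort (fun f g : HahnSeries S ℝ => HahnPos (g - f)) := by
  constructor
  · rintro ⟨f, hf⟩
    exact EsterleAux.no_inc hS f hf
  · rintro ⟨f, hf⟩
    refine EsterleAux.no_inc hS (fun i => -f i) (fun i j h => ?_)
    have : -f j - -f i = f i - f j := neg_sub_neg (f j) (f i)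
    rw [this]
    exact hf i j h
end

section
/- Let Δ ⊆ Γ be an extension of ordered abelian groups. Then Γ is short if and only if Δ is short and the set-theoretic difference [Γ] \ [Δ] of archimedean classes is short. In particular, if rank_ℚ(Γ/Δ) ≤ ℵ₀, then Γ is short iff Δ is short. -/
/-- `[a] < [b]` for archimedean classes. -/
def archLT {Γ : Type*} [AddCommGroup Γ] [LinearOrder Γ] [IsOrderedAddMonoid Γ] (a b : Γ) : Prop :=
  archLE a b ∧ ¬ archLE b a

/-- The set of representatives of archimedean classes of `Γ` not meeting the
subgroup `Δ`, representing `[Γ] \ [Δ]`. -/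
def archDiff {Γ : Type*} [AddCommGroup Γ] [LinearOrder Γ] [IsOrderedAddMonoid Γ] (Δ : AddSubgroup Γ) : Set Γ :=
  {γ : Γ | ∀ δ ∈ Δ, ¬ (archLE γ δ ∧ archLE δ γ)}

namespace ShortAux

open Cardinal Ordinal Set

abbrev Om : Type := (Cardinal.aleph.{0} 1).ord.ToType

instance OmWO : IsWellOrder Om ((· < ·) : Om → Om → Prop) := isWellOrder_lt

/-! ### Basic facts about `Om = ω₁` -/

lemma mk_Om : #Om = Cardinal.aleph 1 := Cardinal.mk_ord_toType _

instance : Nonempty Om := by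
  rw [← Cardinal.mk_ne_zero_iff, mk_Om]
  exact ne_of_gt (lt_of_le_of_lt zero_le Cardinal.aleph0_lt_aleph_one)

lemma not_countable_univ : ¬ (Set.univ : Set Om).Countable := by
  intro h
  have h2 := Set.countable_univ_iff.1 h
  have h3 : #Om ≤ Cardinal.aleph0 := Cardinal.mk_le_aleph0
  rw [mk_Om] at h3
  exact absurd h3 (not_le.2 Cardinal.aleph0_lt_aleph_one)

lemma bounded_of_countable {s : Set Om} (hs : s.Countable) : ∃ b : Om, ∀ x ∈ s, x < b := by
  have h : Set.Bounded ((· < ·) : Om → Om → Prop) s := by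
    by_contra hnb
    have hcof : IsCofinal s := by
      by_contra hc
      exact hnb (not_isCofinal_iff.1 hc)
    have hle := Order.cof_le hcof
    rw [Ordinal.cof_toType, Cardinal.isRegular_aleph_one.cof_ord] at hle
    exact absurd ((Cardinal.countable_iff_lt_aleph_one s).1 hs) (not_lt.2 hle)
  exact h

lemma exists_gt' (i : Om) : ∃ j : Om, i < j := by
  obtain ⟨b, hb⟩ := bounded_of_countable
    (((Cardinal.countable_iff_lt_aleph_one (Set.Iio i)).2
      (Cardinal.mk_Iio_ord_toType i)).union (Set.countable_singleton i))
  refine ⟨b, ?_⟩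
  have := hb i (Or.inr rfl)
  rcases lt_trichotomy i b with h | h | h
  · exact h
  · exact h ▸ this
  · exact this

lemma exists_mono_into {s : Set Om} (hs : ¬ s.Countable) :
    ∃ e : Om → Om, (∀ i, e i ∈ s) ∧ ∀ i j : Om, i < j → e i < e j := by
  haveI : IsWellOrder s (Subrel ((· < ·) : Om → Om → Prop) s) :=
    RelEmbedding.isWellOrder (Subrel.relEmbedding ((· < ·) : Om → Om → Prop) s)
  have h1 : Cardinal.aleph 1 ≤ #s := by
    rw [Cardinal.countable_iff_lt_aleph_one] at hs
    exact le_of_not_gt hs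
  have h2 : Ordinal.type ((· < ·) : Om → Om → Prop) ≤
      Ordinal.type (Subrel ((· < ·) : Om → Om → Prop) (· ∈ s)) := by
    rw [Ordinal.type_toType]
    refine Cardinal.ord_le.2 ?_
    rw [Ordinal.card_type]
    exact h1
  obtain ⟨f⟩ := Ordinal.type_le_iff'.1 h2
  exact ⟨fun i => (f i).1, fun i => (f i).2, fun i j hij => f.map_rel_iff.2 hij⟩

lemma partition_cases (p : Om → Prop) :
    (∃ e : Om → Om, (∀ i, p (e i)) ∧ ∀ i j : Om, i < j → e i < e j) ∨
    (∃ e : Om → Om, (∀ i, ¬ p (e i)) ∧ ∀ i j : Om, i < j → e i < e j) := by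
  by_cases h : {i : Om | p i}.Countable
  · right
    have h2 : ¬ {i : Om | ¬ p i}.Countable := by
      intro h2
      apply not_countable_univ
      exact Set.Countable.mono (fun x _ => (em (p x)).imp id id) (h.union h2)
    exact exists_mono_into h2
  · left
    exact exists_mono_into h

/-! ### Basic facts about archimedean classes -/

variable {G : Type*} [AddCommGroup G] [LinearOrder G] [IsOrderedAddMonoid G]

lemma archLE_refl (a : G) : archLE a a := ⟨1, le_rfl, by simp⟩

lemma archLE_trans {a b c : G} (h1 : archLE a b) (h2 : archLE b c) : archLE a c := by
  obtain ⟨n, hn, h1⟩ := h1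
  obtain ⟨m, hm, h2⟩ := h2
  refine ⟨n * m, Nat.one_le_iff_ne_zero.2 (by positivity), ?_⟩
  calc |a| ≤ n • |b| := h1
    _ ≤ n • (m • |c|) := nsmul_le_nsmul_right h2 n
    _ = (n * m) • |c| := smul_smul n m |c|

lemma archLE_total (a b : G) : archLE a b ∨ archLE b a := by
  by_cases h : archLE a b
  · exact Or.inl h
  · refine Or.inr ⟨1, le_rfl, ?_⟩
    rw [one_smul]
    by_contra hba
    exact h ⟨1, le_rfl, by rw [one_smul]; exact (not_le.1 hba).le⟩

lemma archLE_of_le {a b : G} (h : |a| ≤ |b|) : archLE a b := ⟨1, le_rfl, by simpa⟩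

lemma archLT_nsmul {a b : G} (h : archLT a b) (n : ℕ) : n • |a| < |b| := by
  have hb : ∀ m : ℕ, 1 ≤ m → ¬ (|b| ≤ m • |a|) := fun m hm hle => h.2 ⟨m, hm, hle⟩
  rcases Nat.eq_zero_or_pos n with hn | hn
  · subst hn
    rw [zero_smul]
    calc (0 : G) ≤ |a| := abs_nonneg a
      _ = 1 • |a| := (one_smul ℕ _).symm
      _ < |b| := not_le.1 (hb 1 le_rfl)
  · exact not_le.1 (hb n hn)

lemma archLT_of_forall_nsmul {a b : G} (h : ∀ n : ℕ, n • |a| < |b|) : archLT a b :=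
  ⟨⟨1, le_rfl, le_of_lt (by simpa using h 1)⟩,
   fun ⟨m, _, hle⟩ => absurd hle (not_le.2 (h m))⟩

lemma archLT_abs_lt {a b : G} (h : archLT a b) : |a| < |b| := by
  have := archLT_nsmul h 1
  simpa using this

lemma archLE_archLT_trans {a b c : G} (h1 : archLE a b) (h2 : archLT b c) : archLT a c := by
  apply archLT_of_forall_nsmul
  intro n
  obtain ⟨m, _, h1⟩ := h1
  calc n • |a| ≤ n • (m • |b|) := nsmul_le_nsmul_right h1 n
    _ = (n * m) • |b| := smul_smul n m |b|
    _ < |c| := archLT_nsmul h2 _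

lemma archLT_archLE_trans {a b c : G} (h1 : archLT a b) (h2 : archLE b c) : archLT a c := by
  apply archLT_of_forall_nsmul
  intro n
  obtain ⟨m, _, h2⟩ := h2
  by_contra hc
  push_neg at hc
  have hcb : |b| ≤ (m * n) • |a| := by
    calc |b| ≤ m • |c| := h2
      _ ≤ m • (n • |a|) := nsmul_le_nsmul_right hc m
      _ = (m * n) • |a| := smul_smul m n |a|
  exact absurd hcb (not_le.2 (archLT_nsmul h1 _))

lemma archLT_of_not_archLE {a b : G} (h : ¬ archLE b a) : archLT a b :=
  ⟨(archLE_total a b).resolve_right h, h⟩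

/-! ### Eventual constancy of monotone `ω₁`-sequences w.r.t. a short total preorder -/

lemma eventually_const {α : Type*} (le : α → α → Prop) (htot : ∀ a b, le a b ∨ le b a)
    (htrans : ∀ {a b c}, le a b → le b c → le a c)
    (g : Om → α) (mono : ∀ i j : Om, i ≤ j → le (g i) (g j))
    (noinc : ¬ ∃ F : Om → α, ∀ i j : Om, i < j → (le (F i) (F j) ∧ ¬ le (F j) (F i))) :
    ∃ i₀ : Om, ∀ j : Om, i₀ ≤ j → le (g j) (g i₀) := by
  have hJ : {i : Om | ∀ k, k < i → le (g k) (g i) ∧ ¬ le (g i) (g k)}.Countable := by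
    by_contra hunc
    obtain ⟨e, hes, hemono⟩ := exists_mono_into hunc
    exact noinc ⟨fun i => g (e i), fun i j hij => hes j (e i) (hemono i j hij)⟩
  obtain ⟨b, hb⟩ := bounded_of_countable hJ
  refine ⟨b, fun j hj => ?_⟩
  by_contra hle
  have hne : {k : Om | ¬ le (g k) (g b)}.Nonempty := ⟨j, hle⟩
  set S := {k : Om | ¬ le (g k) (g b)} with hS
  have hkS : wellFounded_lt.min S hne ∈ S := wellFounded_lt.min_mem S hne
  set k := wellFounded_lt.min S hne with hk
  have hmin : ∀ m, m < k → le (g m) (g b) := fun m hm => by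
    by_contra h'
    exact wellFounded_lt.not_lt_min S h' hm
  have hbk : b < k := by
    rcases lt_trichotomy k b with h | h | h
    · exact absurd (mono _ _ h.le) hkS
    · refine absurd ?_ hkS
      rw [h]
      exact (htot (g b) (g b)).elim id id
    · exact h
  have hkJ : k ∈ {i : Om | ∀ m, m < i → le (g m) (g i) ∧ ¬ le (g i) (g m)} := by
    intro m hm
    have h1 : le (g m) (g b) := hmin m hm
    have h2 : le (g b) (g k) := (htot (g b) (g k)).resolve_right hkS
    exact ⟨htrans h1 h2, fun hc => hkS (htrans hc h1)⟩
  exact absurd (hb k hkJ) (not_lt.2 hbk.le)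

/-! ### The core lemma: if the set of archimedean classes is short then the group is short -/

lemma no_inc_of_pi_short {Γ : Type*} [AddCommGroup Γ] [LinearOrder Γ] [IsOrderedAddMonoid Γ]
    (noincPi : ¬ ∃ F : Om → Γ, ∀ i j : Om, i < j → archLT (F i) (F j))
    (nodecPi : ¬ ∃ F : Om → Γ, ∀ i j : Om, i < j → archLT (F j) (F i)) :
    ¬ ∃ f : Om → Γ, ∀ i j : Om, i < j → f i < f j := by
  rintro ⟨f, hf⟩
  have hfmono : ∀ {i j : Om}, i ≤ j → f i ≤ f j := fun {i j} h =>
    h.lt_or_eq.elim (fun h' => (hf _ _ h').le) (fun h' => by rw [h'])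
  -- Step 1: tails stabilize in class
  have hstep : ∀ i : Om, ∃ s : Om, i < s ∧ ∀ j : Om, s ≤ j →
      (archLE (f j - f i) (f s - f i) ∧ archLE (f s - f i) (f j - f i)) := by
    intro i
    obtain ⟨s0, hs0⟩ := exists_gt' i
    have hgpos : ∀ j : Om, 0 < f (max j s0) - f i := fun j =>
      sub_pos.2 (hf _ _ (lt_of_lt_of_le hs0 (le_max_right _ _)))
    have hmono : ∀ j k : Om, j ≤ k →
        archLE (f (max j s0) - f i) (f (max k s0) - f i) := by
      intro j k hjk
      apply archLE_of_le
      rw [abs_of_pos (hgpos j), abs_of_pos (hgpos k)]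
      exact sub_le_sub_right (hfmono (max_le_max hjk le_rfl)) _
    obtain ⟨i₀, hi₀⟩ := eventually_const archLE archLE_total archLE_trans
      (fun j => f (max j s0) - f i) hmono
      (by
        rintro ⟨F, hF⟩
        exact noincPi ⟨F, fun a b hab => archLT_of_not_archLE (hF a b hab).2⟩)
    refine ⟨max i₀ s0, lt_of_lt_of_le hs0 (le_max_right _ _), ?_⟩
    intro j hj
    have hj0 : i₀ ≤ j := le_trans (le_max_left _ _) hj
    have hjs : max j s0 = j := max_eq_left (le_trans (le_max_right i₀ s0) hj)
    have hss : max (max i₀ s0) s0 = max i₀ s0 := max_eq_left (le_max_right _ _)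
    have h1 := hi₀ j hj0
    have h2 := hi₀ (max i₀ s0) (le_max_left _ _)
    have h3 := hmono i₀ j hj0
    have h4 := hmono i₀ (max i₀ s0) (le_max_left _ _)
    rw [hjs] at h1 h3
    rw [hss] at h2 h4
    exact ⟨archLE_trans h1 h4, archLE_trans h2 h3⟩
  choose σ hσlt hσeq using hstep
  -- Step 2: the classes of the tail steps stabilize
  have hgpos : ∀ i : Om, 0 < f (σ i) - f i := fun i => sub_pos.2 (hf _ _ (hσlt i))
  have hanti : ∀ i j : Om, i ≤ j → archLE (f (σ j) - f j) (f (σ i) - f i) := by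
    intro i j hij
    have h1 := hσeq i (max (σ i) (σ j)) (le_max_left _ _)
    have h2 := hσeq j (max (σ i) (σ j)) (le_max_right _ _)
    have hle : archLE (f (max (σ i) (σ j)) - f j) (f (max (σ i) (σ j)) - f i) := by
      apply archLE_of_le
      rw [abs_of_pos (sub_pos.2 (hf _ _ (lt_of_lt_of_le (hσlt j) (le_max_right _ _)))),
        abs_of_pos (sub_pos.2 (hf _ _ (lt_of_lt_of_le (lt_of_le_of_lt hij (hσlt j))
          (le_max_right _ _))))]
      exact sub_le_sub_left (hfmono hij) _
    exact archLE_trans h2.2 (archLE_trans hle h1.1)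
  obtain ⟨i₁, hi₁⟩ := eventually_const (fun a b : Γ => archLE b a)
    (fun a b => (archLE_total b a))
    (fun {a b c} h1 h2 => archLE_trans h2 h1)
    (fun i => f (σ i) - f i) hanti
    (by
      rintro ⟨F, hF⟩
      exact nodecPi ⟨F, fun a b hab => archLT_of_not_archLE (hF a b hab).2⟩)
  set r : Γ := f (σ i₁) - f i₁ with hr
  have hrpos : 0 < r := hgpos i₁
  -- Step 3: rational approximations
  classical
  set S : Om → Set (ℕ × ℕ) :=
    fun i => {p : ℕ × ℕ | 1 ≤ p.2 ∧ p.1 • r ≤ p.2 • (f (max i i₁) - f i₁)} with hSdef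
  have hSmono : ∀ i j : Om, i ≤ j → S i ⊆ S j := by
    intro i j hij p hp
    exact ⟨hp.1, le_trans hp.2 (nsmul_le_nsmul_right
      (sub_le_sub_right (hfmono (max_le_max hij le_rfl)) _) _)⟩
  have hgrow : ∀ i : Om, i₁ ≤ i → ∃ p : ℕ × ℕ, p ∈ S (σ i) ∧ p ∉ S i := by
    intro i hi
    have hmaxi : max i i₁ = i := max_eq_left hi
    have hmaxσ : max (σ i) i₁ = σ i := max_eq_left (le_trans hi (hσlt i).le)
    set d : Γ := f i - f i₁ with hd
    set D : Γ := f (σ i) - f i₁ with hD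
    have hd0 : 0 ≤ d := sub_nonneg.2 (hfmono hi)
    have hDd : D - d = f (σ i) - f i := by rw [hd, hD]; abel
    -- r ≤ n • (D - d)
    obtain ⟨n, hn1, hnle⟩ := hi₁ i hi
    rw [abs_of_pos (hgpos i₁), abs_of_pos (hgpos i)] at hnle
    rw [← hr, ← hDd] at hnle
    -- d ≤ N • r
    obtain ⟨N, hN1, hNle⟩ := (hσeq i₁ (max (σ i₁) i) (le_max_left _ _)).1
    rw [abs_of_pos (sub_pos.2 (hf _ _ (lt_of_lt_of_le (hσlt i₁) (le_max_left _ _)))),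
      abs_of_pos (hgpos i₁), ← hr] at hNle
    have hdN : d ≤ N • r :=
      le_trans (sub_le_sub_right (hfmono (le_max_right (σ i₁) i)) _) hNle
    set P : ℕ → Prop := fun m => m • r ≤ n • d with hP
    have hPbound : ∀ m, P m → m ≤ n * N := by
      intro m hm
      have h2 : m • r ≤ (n * N) • r := by
        calc m • r ≤ n • d := hm
          _ ≤ n • (N • r) := nsmul_le_nsmul_right hdN n
          _ = (n * N) • r := smul_smul n N r
      exact (nsmul_le_nsmul_iff_left hrpos).1 h2
    have hP0 : P 0 := by
      simp only [hP, zero_smul]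
      exact nsmul_nonneg hd0 n
    set m₁ := Nat.findGreatest P (n * N) with hm₁
    have hPm₁ : P m₁ := Nat.findGreatest_spec (Nat.zero_le _) hP0
    have hnot : ¬ P (m₁ + 1) := by
      intro hPs
      exact absurd (Nat.findGreatest_is_greatest (Nat.lt_succ_self m₁) (hPbound _ hPs)) (by
        exact fun h => h hPs)
    refine ⟨(m₁ + 1, n), ⟨hn1, ?_⟩, fun hp => hnot ?_⟩
    · show (m₁ + 1) • r ≤ n • (f (max (σ i) i₁) - f i₁)
      rw [hmaxσ, ← hD]
      calc (m₁ + 1) • r = m₁ • r + r := succ_nsmul r m₁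
        _ ≤ n • d + n • (D - d) := add_le_add hPm₁ hnle
        _ = n • D := by rw [← nsmul_add]; congr 1; abel
    · have hp2 := hp.2
      rw [hmaxi, ← hd] at hp2
      exact hp2
  -- Step 4: the birth-time contradiction
  set T : Set (ℕ × ℕ) := {p : ℕ × ℕ | ∃ i : Om, p ∈ S i} with hT
  set birth : ℕ × ℕ → Om := fun p =>
    if h : p ∈ T then wellFounded_lt.min {i : Om | p ∈ S i} h else Classical.arbitrary Om
    with hbirth
  obtain ⟨b, hb⟩ := bounded_of_countable ((Set.to_countable T).image birth)
  obtain ⟨p, hpS, hpN⟩ := hgrow (max b i₁) (le_max_right _ _)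
  have hpT : p ∈ T := ⟨σ (max b i₁), hpS⟩
  have hmem : p ∈ S (birth p) := by
    rw [hbirth]
    simp only [dif_pos hpT]
    exact wellFounded_lt.min_mem {i : Om | p ∈ S i} hpT
  have hlt : birth p < b := hb _ (Set.mem_image_of_mem _ hpT)
  exact hpN (hSmono _ _ (le_trans hlt.le (le_max_left _ _)) hmem)

/-! ### From shortness of `Δ` and the difference to shortness of the class set -/

lemma abs_mem_addSubgroup {G : Type*} [AddCommGroup G] [LinearOrder G] [IsOrderedAddMonoid G] {Δ : AddSubgroup G}
    {x : G} (h : x ∈ Δ) : |x| ∈ Δ := by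
  rcases abs_choice x with h' | h' <;> rw [h']
  exacts [h, neg_mem h]

lemma mem_archDiff_ne_zero {G : Type*} [AddCommGroup G] [LinearOrder G] [IsOrderedAddMonoid G] {Δ : AddSubgroup G}
    {x : G} (hx : x ∈ archDiff Δ) : x ≠ 0 := by
  intro h0
  subst h0
  exact hx 0 (zero_mem Δ) ⟨archLE_refl 0, archLE_refl 0⟩

lemma pi_short_to_short {Γ : Type*} [AddCommGroup Γ] [LinearOrder Γ] [IsOrderedAddMonoid Γ]
    (noincPi : ¬ ∃ F : Om → Γ, ∀ i j : Om, i < j → archLT (F i) (F j))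
    (nodecPi : ¬ ∃ F : Om → Γ, ∀ i j : Om, i < j → archLT (F j) (F i)) :
    RelShort ((· < ·) : Γ → Γ → Prop) := by
  constructor
  · exact no_inc_of_pi_short noincPi nodecPi
  · rintro ⟨f, hf⟩
    exact no_inc_of_pi_short noincPi nodecPi
      ⟨fun i => - f i, fun i j hij => neg_lt_neg (hf i j hij)⟩

lemma chain_cases {Γ : Type*} [AddCommGroup Γ] [LinearOrder Γ] [IsOrderedAddMonoid Γ] {Δ : AddSubgroup Γ}
    (hΔ : RelShort ((· < ·) : Δ → Δ → Prop))
    (hdiff : RelShort (fun a b : archDiff Δ => archLT a.1 b.1)) :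
    (¬ ∃ F : Om → Γ, ∀ i j : Om, i < j → archLT (F i) (F j)) ∧
    (¬ ∃ F : Om → Γ, ∀ i j : Om, i < j → archLT (F j) (F i)) := by
  constructor
  · rintro ⟨F, hF⟩
    rcases partition_cases (fun i => ∃ δ ∈ Δ, archLE (F i) δ ∧ archLE δ (F i)) with
      ⟨e, hep, hem⟩ | ⟨e, hep, hem⟩
    · choose δ hδΔ hδ1 hδ2 using hep
      refine hΔ.1 ⟨fun i => ⟨|δ i|, abs_mem_addSubgroup (hδΔ i)⟩, fun i j hij => ?_⟩
      have h1 : archLT (δ i) (δ j) :=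
        archLT_archLE_trans (archLE_archLT_trans (hδ2 i) (hF _ _ (hem i j hij))) (hδ1 j)
      exact Subtype.mk_lt_mk.2 (archLT_abs_lt h1)
    · have hmem : ∀ i, F (e i) ∈ archDiff Δ := fun i => by
        intro δ hδ hpair
        exact hep i ⟨δ, hδ, hpair⟩
      exact hdiff.1 ⟨fun i => ⟨F (e i), hmem i⟩, fun i j hij => hF _ _ (hem i j hij)⟩
  · rintro ⟨F, hF⟩
    rcases partition_cases (fun i => ∃ δ ∈ Δ, archLE (F i) δ ∧ archLE δ (F i)) with
      ⟨e, hep, hem⟩ | ⟨e, hep, hem⟩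
    · choose δ hδΔ hδ1 hδ2 using hep
      refine hΔ.2 ⟨fun i => ⟨|δ i|, abs_mem_addSubgroup (hδΔ i)⟩, fun i j hij => ?_⟩
      have h1 : archLT (δ j) (δ i) :=
        archLT_archLE_trans (archLE_archLT_trans (hδ2 j) (hF _ _ (hem i j hij))) (hδ1 i)
      exact Subtype.mk_lt_mk.2 (archLT_abs_lt h1)
    · have hmem : ∀ i, F (e i) ∈ archDiff Δ := fun i => by
        intro δ hδ hpair
        exact hep i ⟨δ, hδ, hpair⟩
      exact hdiff.2 ⟨fun i => ⟨F (e i), hmem i⟩, fun i j hij => hF _ _ (hem i j hij)⟩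

/-! ### The easy directions -/

lemma short_delta {Γ : Type*} [AddCommGroup Γ] [LinearOrder Γ] [IsOrderedAddMonoid Γ] {Δ : AddSubgroup Γ}
    (h : RelShort ((· < ·) : Γ → Γ → Prop)) : RelShort ((· < ·) : Δ → Δ → Prop) := by
  constructor
  · rintro ⟨F, hF⟩
    refine h.1 ⟨fun i => (F i : Γ), fun i j hij => ?_⟩
    exact_mod_cast hF i j hij
  · rintro ⟨F, hF⟩
    refine h.2 ⟨fun i => (F i : Γ), fun i j hij => ?_⟩
    exact_mod_cast hF i j hij

lemma short_diff {Γ : Type*} [AddCommGroup Γ] [LinearOrder Γ] [IsOrderedAddMonoid Γ] {Δ : AddSubgroup Γ}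
    (h : RelShort ((· < ·) : Γ → Γ → Prop)) :
    RelShort (fun a b : archDiff Δ => archLT a.1 b.1) := by
  constructor
  · rintro ⟨F, hF⟩
    exact h.1 ⟨fun i => |(F i).1|, fun i j hij => archLT_abs_lt (hF i j hij)⟩
  · rintro ⟨F, hF⟩
    exact h.2 ⟨fun i => |(F i).1|, fun i j hij => archLT_abs_lt (hF i j hij)⟩

/-! ### The countable-rank part -/

lemma small_sum {G : Type*} [AddCommGroup G] [LinearOrder G] [IsOrderedAddMonoid G] {ι : Type*} {s : Finset ι}
    {x : ι → G} {b : G} (hb : 0 < |b|)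
    (h : ∀ i ∈ s, ∀ n : ℕ, n • |x i| < |b|) : ∀ n : ℕ, n • |∑ i ∈ s, x i| < |b| := by
  classical
  induction s using Finset.induction_on with
  | empty => intro n; simpa using hb
  | insert _ _ ha ih =>
    rename_i a s
    intro n
    rw [Finset.sum_insert ha]
    have h1 := h _ (Finset.mem_insert_self _ _)
    have h2 := ih (fun i hi => h i (Finset.mem_insert_of_mem hi))
    by_contra hcon
    push_neg at hcon
    have hle : n • |x a + ∑ i ∈ s, x i| ≤ n • |x a| + n • |∑ i ∈ s, x i| := by
      rw [← nsmul_add]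
      exact nsmul_le_nsmul_right (abs_add_le _ _) n
    have h3 : |b| + |b| ≤ (n • |x a| + n • |∑ i ∈ s, x i|) + (n • |x a| + n • |∑ i ∈ s, x i|) :=
      add_le_add (le_trans hcon hle) (le_trans hcon hle)
    have h4 : (n • |x a| + n • |∑ i ∈ s, x i|) + (n • |x a| + n • |∑ i ∈ s, x i|)
        = (2 * n) • |x a| + (2 * n) • |∑ i ∈ s, x i| := by
      rw [two_mul, add_nsmul, add_nsmul]
      abel
    have h5 : (2 * n) • |x a| + (2 * n) • |∑ i ∈ s, x i| < |b| + |b| :=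
      add_lt_add (h1 _) (h2 _)
    rw [h4] at h3
    exact absurd (lt_of_le_of_lt h3 h5) (lt_irrefl _)

lemma dominant {G : Type*} [AddCommGroup G] [LinearOrder G] [IsOrderedAddMonoid G] {y t : G}
    (h : ∀ n : ℕ, n • |t| < |y|) : archLE (y + t) y ∧ archLE y (y + t) := by
  have ht1 : |t| ≤ |y| := le_of_lt (by simpa using h 1)
  have h2 : |t| + |t| < |y| := by
    have := h 2
    rwa [two_nsmul] at this
  constructor
  · refine ⟨2, one_le_two, ?_⟩
    rw [two_nsmul]
    exact le_trans (abs_add_le y t) (add_le_add_right ht1 _)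
  · refine ⟨2, one_le_two, ?_⟩
    have h3 : |y| ≤ |y + t| + |t| := by
      calc |y| = |y + t + -t| := by rw [add_neg_cancel_right]
        _ ≤ |y + t| + |-t| := abs_add_le _ _
        _ = |y + t| + |t| := by rw [abs_neg]
    have h4 : |t| ≤ |y + t| := by
      by_contra hcon
      push_neg at hcon
      have h5 : |y| < |t| + |t| := lt_of_le_of_lt h3 (add_lt_add_left hcon _)
      exact absurd (lt_trans h5 h2) (lt_irrefl _)
    rw [two_nsmul]
    exact le_trans h3 (add_le_add_right h4 _)

lemma zsmul_equiv {G : Type*} [AddCommGroup G] [LinearOrder G] [IsOrderedAddMonoid G] {c : ℤ} (hc : c ≠ 0) (a : G) :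
    archLE (c • a) a ∧ archLE a (c • a) := by
  have habs : |c • a| = c.natAbs • |a| := by
    rw [abs_zsmul, Int.abs_eq_natAbs, natCast_zsmul]
  have h1 : 1 ≤ c.natAbs := Int.natAbs_pos.2 hc
  constructor
  · exact ⟨c.natAbs, h1, le_of_eq habs⟩
  · refine ⟨1, le_rfl, ?_⟩
    rw [one_smul, habs]
    calc |a| = 1 • |a| := (one_smul ℕ _).symm
      _ ≤ c.natAbs • |a| := nsmul_le_nsmul_left (abs_nonneg a) h1

lemma sum_mem_imp_zero {Γ : Type*} [AddCommGroup Γ] [LinearOrder Γ] [IsOrderedAddMonoid Γ] {Δ : AddSubgroup Γ} {ι : Type*}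
    (F : ι → Γ) (s : Finset ι) (c : ι → ℤ)
    (hmem : ∀ i ∈ s, F i ∈ archDiff Δ)
    (htop : ∀ t : Finset ι, t ⊆ s → t.Nonempty → ∃ i₀ ∈ t, ∀ i ∈ t, i ≠ i₀ → archLT (F i) (F i₀))
    (hsum : (∑ i ∈ s, c i • F i) ∈ Δ) : ∀ i ∈ s, c i = 0 := by
  classical
  by_contra hcon
  push_neg at hcon
  obtain ⟨iw, hiw, hciw⟩ := hcon
  set t := s.filter (fun i => c i ≠ 0) with ht
  have htne : t.Nonempty := ⟨iw, Finset.mem_filter.2 ⟨hiw, hciw⟩⟩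
  obtain ⟨i₀, hi₀t, hi₀top⟩ := htop t (Finset.filter_subset _ _) htne
  have hc0 : c i₀ ≠ 0 := (Finset.mem_filter.1 hi₀t).2
  have hF0 : F i₀ ≠ 0 := mem_archDiff_ne_zero (hmem i₀ (Finset.filter_subset _ _ hi₀t))
  have hsum_eq1 : ∑ i ∈ t, c i • F i = ∑ i ∈ s, c i • F i := by
    apply Finset.sum_filter_of_ne
    intro x _ hfx hcx
    apply hfx
    rw [hcx, zero_smul]
  have hsum_eq : ∑ i ∈ s, c i • F i = c i₀ • F i₀ + ∑ i ∈ t.erase i₀, c i • F i := by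
    rw [← hsum_eq1]
    exact (Finset.add_sum_erase t (fun i => c i • F i) hi₀t).symm
  have hy := zsmul_equiv hc0 (F i₀)
  have hypos : 0 < |c i₀ • F i₀| := by
    rw [abs_zsmul, Int.abs_eq_natAbs, natCast_zsmul]
    exact nsmul_pos (abs_pos.2 hF0) (Int.natAbs_pos.2 hc0).ne'
  have hsmall : ∀ n : ℕ, n • |∑ i ∈ t.erase i₀, c i • F i| < |c i₀ • F i₀| := by
    apply small_sum hypos
    intro i hi
    have hit : i ∈ t := Finset.mem_of_mem_erase hi
    have hine : i ≠ i₀ := Finset.ne_of_mem_erase hi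
    have hci : c i ≠ 0 := (Finset.mem_filter.1 hit).2
    have hlt : archLT (c i • F i) (c i₀ • F i₀) :=
      archLE_archLT_trans (zsmul_equiv hci (F i)).1
        (archLT_archLE_trans (hi₀top i hit hine) hy.2)
    exact archLT_nsmul hlt
  have hdom := dominant hsmall
  have hmem₀ := hmem i₀ (Finset.filter_subset _ _ hi₀t)
  refine hmem₀ (∑ i ∈ s, c i • F i) hsum ⟨?_, ?_⟩
  · rw [hsum_eq]
    exact archLE_trans hy.2 hdom.2
  · rw [hsum_eq]
    exact archLE_trans hdom.1 hy.1

lemma torsion_of_tmul_eq_zero {M : Type*} [AddCommGroup M] {x : M}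
    (h : ((1 : ℚ) ⊗ₜ[ℤ] x : TensorProduct ℤ ℚ M) = 0) : ∃ k : ℤ, k ≠ 0 ∧ k • x = 0 := by
  by_contra hc
  push_neg at hc
  haveI : Module.Flat ℤ ℚ := IsLocalization.flat ℚ (nonZeroDivisors ℤ)
  set φ : ℤ →ₗ[ℤ] M := LinearMap.toSpanSingleton ℤ M x with hφdef
  have hφ : Function.Injective φ := by
    rw [injective_iff_map_eq_zero]
    intro a ha
    by_contra hne
    refine hc a hne ?_
    calc a • x = φ a := (LinearMap.toSpanSingleton_apply ℤ M x a).symm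
      _ = 0 := ha
  have hinj := Module.Flat.lTensor_preserves_injective_linearMap (M := ℚ) φ hφ
  have h1 : (LinearMap.lTensor ℚ φ) ((1 : ℚ) ⊗ₜ[ℤ] (1 : ℤ)) = (1 : ℚ) ⊗ₜ[ℤ] x := by
    rw [LinearMap.lTensor_tmul]
    congr 1
    rw [hφdef, LinearMap.toSpanSingleton_apply, one_smul]
  have h2 : ((1 : ℚ) ⊗ₜ[ℤ] (1 : ℤ) : TensorProduct ℤ ℚ ℤ) = 0 := by
    apply hinj
    rw [h1, h, map_zero]
  have h3 := congrArg (TensorProduct.rid ℤ ℚ) h2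
  rw [TensorProduct.rid_tmul, map_zero, one_smul] at h3
  exact one_ne_zero h3

lemma rank_aux {Γ : Type*} [AddCommGroup Γ] [LinearOrder Γ] [IsOrderedAddMonoid Γ] (Δ : AddSubgroup Γ)
    (hrank : Module.rank ℚ (TensorProduct ℤ ℚ (Γ ⧸ Δ)) ≤ Cardinal.aleph0)
    (F : Om → Γ) (hmem : ∀ i, F i ∈ archDiff Δ)
    (htop : ∀ t : Finset Om, t.Nonempty → ∃ i₀ ∈ t, ∀ i ∈ t, i ≠ i₀ → archLT (F i) (F i₀)) :
    False := by
  classical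
  set v : Om → TensorProduct ℤ ℚ (Γ ⧸ Δ) :=
    fun i => (1 : ℚ) ⊗ₜ[ℤ] (QuotientAddGroup.mk' Δ (F i)) with hv
  have hli : LinearIndependent ℚ v := by
    rw [linearIndependent_iff']
    intro s q hq i hi
    set N : ℕ := ∏ j ∈ s, (q j).den with hN
    have hNnz : N ≠ 0 := by
      rw [hN]
      exact Finset.prod_ne_zero_iff.2 (fun j _ => (q j).den_nz)
    have hN0 : (N : ℚ) ≠ 0 := Nat.cast_ne_zero.2 hNnz
    set c : Om → ℤ := fun j => ((N / (q j).den : ℕ) : ℤ) * (q j).num with hc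
    have hcq : ∀ j ∈ s, ((c j : ℤ) : ℚ) = (N : ℚ) * q j := by
      intro j hj
      obtain ⟨k, hk⟩ := Finset.dvd_prod_of_mem (fun j => (q j).den) hj
      rw [← hN] at hk
      have hdiv : (N / (q j).den : ℕ) = k := by
        rw [hk]
        exact Nat.mul_div_cancel_left k (q j).pos
      rw [hc]
      simp only [hdiv]
      push_cast
      rw [hk]
      push_cast
      rw [← Rat.mul_den_eq_num]
      ring
    have h0 : ((1 : ℚ) ⊗ₜ[ℤ] (∑ j ∈ s, c j • (QuotientAddGroup.mk' Δ (F j)))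
        : TensorProduct ℤ ℚ (Γ ⧸ Δ)) = 0 := by
      rw [TensorProduct.tmul_sum]
      have hterm : ∀ j ∈ s, ((1 : ℚ) ⊗ₜ[ℤ] (c j • (QuotientAddGroup.mk' Δ (F j)))
          : TensorProduct ℤ ℚ (Γ ⧸ Δ)) = ((c j : ℤ) : ℚ) • v j := by
        intro j hj
        rw [TensorProduct.tmul_smul, Int.cast_smul_eq_zsmul]
      calc ∑ j ∈ s, ((1 : ℚ) ⊗ₜ[ℤ] (c j • (QuotientAddGroup.mk' Δ (F j)))
            : TensorProduct ℤ ℚ (Γ ⧸ Δ))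
          = ∑ j ∈ s, ((c j : ℤ) : ℚ) • v j := Finset.sum_congr rfl hterm
        _ = ∑ j ∈ s, ((N : ℚ) * q j) • v j :=
            Finset.sum_congr rfl (fun j hj => by rw [hcq j hj])
        _ = (N : ℚ) • ∑ j ∈ s, q j • v j := by
            rw [Finset.smul_sum]
            exact Finset.sum_congr rfl (fun j _ => (smul_smul _ _ _).symm)
        _ = 0 := by rw [hq, smul_zero]
    obtain ⟨k, hk0, hkx⟩ := torsion_of_tmul_eq_zero h0
    have hmemΔ : (∑ j ∈ s, (k * c j) • F j) ∈ Δ := by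
      have hmk : QuotientAddGroup.mk' Δ (∑ j ∈ s, (k * c j) • F j) = 0 := by
        rw [map_sum]
        simp_rw [map_zsmul, mul_smul]
        rw [← Finset.smul_sum, hkx]
      rwa [QuotientAddGroup.mk'_apply, QuotientAddGroup.eq_zero_iff] at hmk
    have hall := sum_mem_imp_zero F s (fun j => k * c j)
      (fun i _ => hmem i) (fun t _ htne => htop t htne) hmemΔ
    have hci : c i = 0 := by
      rcases mul_eq_zero.1 (hall i hi) with h | h
      · exact absurd h hk0
      · exact h
    have hNq : (N : ℚ) * q i = 0 := by
      rw [← hcq i hi, hci]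
      norm_num
    rcases mul_eq_zero.1 hNq with h | h
    · exact absurd h hN0
    · exact h
  have hcard := hli.cardinal_lift_le_rank
  rw [mk_Om] at hcard
  have h2 := Cardinal.lift_le.2 hrank
  rw [Cardinal.lift_aleph0] at h2
  have h3 := le_trans hcard h2
  have h4 : Cardinal.aleph0 < Cardinal.lift (Cardinal.aleph.{0} 1) := by
    rw [← Cardinal.lift_aleph0]
    exact Cardinal.lift_lt.2 Cardinal.aleph0_lt_aleph_one
  exact absurd h3 (not_le.2 h4)

lemma diff_short_of_rank {Γ : Type*} [AddCommGroup Γ] [LinearOrder Γ] [IsOrderedAddMonoid Γ] (Δ : AddSubgroup Γ)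
    (hrank : Module.rank ℚ (TensorProduct ℤ ℚ (Γ ⧸ Δ)) ≤ Cardinal.aleph0) :
    RelShort (fun a b : archDiff Δ => archLT a.1 b.1) := by
  constructor
  · rintro ⟨F, hF⟩
    refine rank_aux Δ hrank (fun i => (F i).1) (fun i => (F i).2) ?_
    intro t htne
    refine ⟨t.max' htne, Finset.max'_mem t htne, fun i hi hne => ?_⟩
    exact hF i (t.max' htne) (lt_of_le_of_ne (Finset.le_max' t i hi) hne)
  · rintro ⟨F, hF⟩
    refine rank_aux Δ hrank (fun i => (F i).1) (fun i => (F i).2) ?_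
    intro t htne
    refine ⟨t.min' htne, Finset.min'_mem t htne, fun i hi hne => ?_⟩
    exact hF (t.min' htne) i (lt_of_le_of_ne (Finset.min'_le t i hi) (Ne.symm hne))

end ShortAux

/-- Let `Δ ⊆ Γ` be an extension of ordered abelian groups. Then `Γ` is short iff `Δ` and
the difference `[Γ] \ [Δ]` of archimedean classes are short. In particular, if
`rank_ℚ(Γ/Δ) ≤ ℵ₀`, then `Γ` is short iff `Δ` is short. -/
theorem short_oag_extension {Γ : Type*} [AddCommGroup Γ] [LinearOrder Γ] [IsOrderedAddMonoid Γ] (Δ : AddSubgroup Γ) :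
    (RelShort ((· < ·) : Γ → Γ → Prop) ↔
      (RelShort ((· < ·) : Δ → Δ → Prop) ∧
        RelShort (fun a b : archDiff Δ => archLT a.1 b.1))) ∧
    (Module.rank ℚ (TensorProduct ℤ ℚ (Γ ⧸ Δ)) ≤ Cardinal.aleph0 →
      (RelShort ((· < ·) : Γ → Γ → Prop) ↔ RelShort ((· < ·) : Δ → Δ → Prop))) := by
  have main : RelShort ((· < ·) : Γ → Γ → Prop) ↔
      (RelShort ((· < ·) : Δ → Δ → Prop) ∧
        RelShort (fun a b : archDiff Δ => archLT a.1 b.1)) := by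
    constructor
    · intro h
      exact ⟨ShortAux.short_delta h, ShortAux.short_diff h⟩
    · rintro ⟨hΔ, hdiff⟩
      obtain ⟨hni, hnd⟩ := ShortAux.chain_cases hΔ hdiff
      exact ShortAux.pi_short_to_short hni hnd
  refine ⟨main, fun hrank => ⟨fun h => ShortAux.short_delta h, fun hΔ => ?_⟩⟩
  exact main.2 ⟨hΔ, ShortAux.diff_short_of_rank Δ hrank⟩
end

section
/- Let K be an ordered field equipped with a convex valuation v with value group Γ, whose residue field is archimedean. Then K is short as a linearly ordered set if and only if Γ is short. -/
universe u

open Cardinal Ordinal Set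

private abbrev SOFIdx : Type := (Cardinal.aleph.{0} 1).ord.ToType

private instance : IsWellOrder SOFIdx (· < ·) := isWellOrder_lt

private lemma SOF.nonempty : Nonempty SOFIdx := by
  rw [Ordinal.toType_nonempty_iff_ne_zero]
  simp only [ne_eq, Cardinal.ord_eq_zero]
  exact (Cardinal.aleph0_pos.trans Cardinal.aleph0_lt_aleph_one).ne'

private lemma SOF.countable_Iio (j : SOFIdx) : (Set.Iio j).Countable := by
  rw [Set.countable_coe_iff.symm]
  have h1 : Countable (Set.Iio (Ordinal.typein ((· < ·) : SOFIdx → SOFIdx → Prop) j)) := by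
    rw [← Cardinal.mk_le_aleph0_iff, Ordinal.mk_Iio_ordinal]
    have : (Ordinal.typein ((· < ·) : SOFIdx → SOFIdx → Prop) j).card < ℵ₁ := by
      rw [← Cardinal.lt_ord]
      exact Ordinal.typein_lt_self j
    have h2 : (Ordinal.typein ((· < ·) : SOFIdx → SOFIdx → Prop) j).card ≤ ℵ₀ := by
      exact Order.lt_succ_iff.1 (show _ < Order.succ ℵ₀ by rw [Cardinal.succ_aleph0]; exact this)
    simpa using Cardinal.lift_le.{1}.2 h2
  refine Function.Injective.countable (β := Set.Iio (Ordinal.typein ((· < ·) : SOFIdx → SOFIdx → Prop) j))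
    (f := fun s => ⟨Ordinal.typein ((· < ·) : SOFIdx → SOFIdx → Prop) s.1,
      (Ordinal.typein_lt_typein _).2 s.2⟩) ?_
  intro a b hab
  have := congrArg Subtype.val hab
  simpa [Subtype.ext_iff, Ordinal.typein_inj] using this

private lemma SOF.exists_gt {S : Set SOFIdx} (h : S.Countable) : ∃ b, ∀ s ∈ S, s < b := by
  haveI : Countable ↥S := h.to_subtype
  set o := (Cardinal.aleph.{0} 1).ord with ho
  have hsup : (⨆ s : S, Ordinal.typein ((· < ·) : SOFIdx → SOFIdx → Prop) s.1) < o := by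
    apply Ordinal.iSup_lt_ord
    · rw [Cardinal.isRegular_aleph_one.cof_eq]
      exact lt_of_le_of_lt Cardinal.mk_le_aleph0 Cardinal.aleph0_lt_aleph_one
    · exact fun s => Ordinal.typein_lt_self s.1
  have hlim : Order.IsSuccLimit o := Cardinal.isSuccLimit_ord Cardinal.aleph0_lt_aleph_one.le
  have hsucc : (⨆ s : S, Ordinal.typein ((· < ·) : SOFIdx → SOFIdx → Prop) s.1) + 1 < o := by
    have := hlim.succ_lt hsup
    simpa [Order.succ] using this
  obtain ⟨b, hb⟩ := Ordinal.typein_surj (α := SOFIdx) (· < ·)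
    (o := (⨆ s : S, Ordinal.typein ((· < ·) : SOFIdx → SOFIdx → Prop) s.1) + 1)
    (by rwa [Ordinal.type_toType])
  refine ⟨b, fun s hs => ?_⟩
  rw [← Ordinal.typein_lt_typein (α := SOFIdx) (· < ·), hb]
  exact lt_of_le_of_lt (Ordinal.le_iSup _ (⟨s, hs⟩ : S)) (lt_add_one _)

private noncomputable def SOF.ub (S : Set SOFIdx) : SOFIdx :=
  letI : Nonempty SOFIdx := SOF.nonempty
  haveI := Classical.dec S.Countable
  if h : S.Countable then Classical.choose (SOF.exists_gt h) else Classical.arbitrary _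

private lemma SOF.lt_ub {S : Set SOFIdx} (hS : S.Countable) {s : SOFIdx} (hs : s ∈ S) :
    s < SOF.ub S := by
  unfold SOF.ub
  haveI := Classical.dec S.Countable
  rw [dif_pos hS]
  exact Classical.choose_spec (SOF.exists_gt hS) s hs

private lemma SOF.antitone_eventually_const {Γ : Type u} [LinearOrder Γ] (f : SOFIdx → Γ)
    (hf : ∀ i j : SOFIdx, i ≤ j → f j ≤ f i)
    (hΓ : ¬ ∃ g : SOFIdx → Γ, ∀ i j, i < j → g j < g i) :
    ∃ b, ∀ j, b ≤ j → f j = f b := by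
  by_contra hev
  push_neg at hev
  have hN : ∀ i : SOFIdx, ∃ j, f j < f i := by
    intro i
    obtain ⟨j, hj, hne⟩ := hev i
    exact ⟨j, lt_of_le_of_ne (hf i j hj) hne⟩
  choose N hN' using hN
  haveI : Nonempty SOFIdx := SOF.nonempty
  classical
  let ub : Set SOFIdx → SOFIdx := fun S =>
    if h : S.Countable then Classical.choose (SOF.exists_gt h) else Classical.arbitrary _
  have hub : ∀ (S : Set SOFIdx), S.Countable → ∀ s ∈ S, s < ub S := by
    intro S hS
    simp only [ub, dif_pos hS]
    exact Classical.choose_spec (SOF.exists_gt hS)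
  have wf : WellFounded ((· < ·) : SOFIdx → SOFIdx → Prop) := IsWellFounded.wf
  let F : ∀ j : SOFIdx, (∀ i : SOFIdx, i < j → SOFIdx) → SOFIdx :=
    fun j IH => N (ub {y | ∃ i, ∃ h : i < j, IH i h = y})
  let H : SOFIdx → SOFIdx := fun j => wf.fix F j
  have hHeq : ∀ j, H j = N (ub {y | ∃ i, ∃ _ : i < j, H i = y}) := by
    intro j
    show wf.fix F j = _
    rw [wf.fix_eq]
  have key : ∀ i j : SOFIdx, i < j → f (H j) < f (H i) := by
    intro i j hij
    have hS : ({y | ∃ i, ∃ _ : i < j, H i = y} : Set SOFIdx).Countable := by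
      have : {y | ∃ i, ∃ _ : i < j, H i = y} = H '' Set.Iio j := by
        ext y; simp [Set.mem_image, Set.mem_Iio]
      rw [this]
      exact (SOF.countable_Iio j).image H
    have hmem : H i ∈ {y | ∃ i, ∃ _ : i < j, H i = y} := ⟨i, hij, rfl⟩
    have h1 : H i < ub {y | ∃ i, ∃ _ : i < j, H i = y} := hub _ hS _ hmem
    have h2 : f (N (ub {y | ∃ i, ∃ _ : i < j, H i = y})) <
        f (ub {y | ∃ i, ∃ _ : i < j, H i = y}) := hN' _
    rw [hHeq j]
    exact lt_of_lt_of_le h2 (hf _ _ h1.le)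
  exact hΓ ⟨fun i => f (H i), key⟩

private lemma SOF.rat_btwn {K : Type u} [Field K] [LinearOrder K] [IsStrictOrderedRing K] {A B : K} (hA : 0 < A)
    {n m : ℕ} (hn : A < n) (hm : 0 < m) (hgap : A + 1/(m:K) < B) :
    ∃ k l : ℕ, 0 < l ∧ A < (k:K)/(l:K) ∧ (k:K)/(l:K) < B := by
  classical
  set L : ℕ := 2*m with hLdef
  have hL : (0:K) < (L:K) := Nat.cast_pos.2 (by omega)
  have hne : {k : ℕ | A * L < (k:K)}.Nonempty := by
    refine ⟨L*n, ?_⟩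
    have h1 : A * L < (n:K) * L := mul_lt_mul_of_pos_right hn hL
    have h2 : ((L*n : ℕ):K) = (n:K)*(L:K) := by push_cast; ring
    simpa [Set.mem_setOf_eq, h2] using h1
  set k₀ := sInf {k : ℕ | A * L < (k:K)} with hk₀
  have hk₀mem : A * L < (k₀:K) := Nat.sInf_mem hne
  have hk₀pos : 0 < k₀ := by
    rcases Nat.eq_zero_or_pos k₀ with h|h
    · rw [h] at hk₀mem; norm_num at hk₀mem
      exact absurd hk₀mem (not_lt.2 (mul_pos hA hL).le)
    · exact h
  have hpred : ((k₀ - 1 : ℕ):K) ≤ A * L := by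
    by_contra hcon
    push_neg at hcon
    have := Nat.sInf_le (show k₀ - 1 ∈ {k : ℕ | A * L < (k:K)} from hcon)
    omega
  have hk₀le : (k₀:K) ≤ A * L + 1 := by
    rw [Nat.cast_sub hk₀pos] at hpred
    push_cast at hpred
    linarith
  refine ⟨k₀, L, by omega, ?_, ?_⟩
  · rw [lt_div_iff₀ hL]
    exact hk₀mem
  · have h1 : (k₀:K)/L ≤ A + 1/L := by
      rw [div_le_iff₀ hL, add_mul, one_div, inv_mul_cancel₀ hL.ne']
      exact hk₀le
    have h2 : (1:K)/L < 1/m := by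
      apply div_lt_div_of_pos_left one_pos (Nat.cast_pos.2 hm)
      exact_mod_cast (by omega : m < L)
    calc (k₀:K)/L ≤ A + 1/L := h1
      _ < A + 1/m := by linarith
      _ < B := hgap

private lemma SOF.noInc {K Γ : Type u} [Field K] [LinearOrder K] [IsStrictOrderedRing K] [AddCommGroup Γ] [LinearOrder Γ] [IsOrderedAddMonoid Γ]
    (v : K → Γ)
    (hmul : ∀ x y : K, x ≠ 0 → y ≠ 0 → v (x * y) = v x + v y)
    (hconv : ∀ x y : K, 0 < x → x ≤ y → v y ≤ v x)
    (hres : ∀ x : K, (x = 0 ∨ 0 ≤ v x) → ∃ n : ℕ, x < (n : K))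
    (hΓ2 : ¬ ∃ f : SOFIdx → Γ, ∀ i j, i < j → f j < f i)
    (x : SOFIdx → K) (hx : ∀ i j : SOFIdx, i < j → x i < x j) : False := by
  classical
  -- basic valuation facts
  have hv1 : v 1 = 0 := by
    have h := hmul 1 1 one_ne_zero one_ne_zero
    rw [mul_one] at h
    have h2 : v 1 + 0 = v 1 + v 1 := by rw [add_zero]; exact h
    exact (add_left_cancel h2).symm
  have hvinv : ∀ t : K, t ≠ 0 → v t⁻¹ = -v t := by
    intro t ht
    have h := hmul t t⁻¹ ht (inv_ne_zero ht)
    rw [mul_inv_cancel₀ ht, hv1] at h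
    exact (neg_eq_of_add_eq_zero_right h.symm).symm
  have hvdiv : ∀ a e : K, a ≠ 0 → e ≠ 0 → v (a / e) = v a - v e := by
    intro a e ha he
    rw [div_eq_mul_inv, hmul a e⁻¹ ha (inv_ne_zero he), hvinv e he, sub_eq_add_neg]
  have hbound : ∀ t : K, v t = 0 → ∃ n : ℕ, t < n := fun t ht => hres t (Or.inr ht.ge)
  have hlow : ∀ t : K, 0 < t → v t = 0 → ∃ m : ℕ, 0 < m ∧ (1:K)/m < t := by
    intro t ht hv
    obtain ⟨m, hm⟩ := hres t⁻¹ (Or.inr (by rw [hvinv t ht.ne', hv, neg_zero]))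
    have hminv : 0 < t⁻¹ := inv_pos.2 ht
    have hm0 : 0 < m := by
      have : (0:K) < m := lt_trans hminv hm
      exact_mod_cast this
    refine ⟨m, hm0, ?_⟩
    rw [div_lt_iff₀ (Nat.cast_pos.2 hm0)]
    have := mul_lt_mul_of_pos_left hm ht
    rwa [mul_inv_cancel₀ ht.ne'] at this
  have hxmono : ∀ i j : SOFIdx, i ≤ j → x i ≤ x j := fun i j h =>
    h.lt_or_eq.elim (fun h => (hx i j h).le) (fun h => by rw [h])
  have hsucc : ∀ i : SOFIdx, ∃ j, i < j := fun i => by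
    obtain ⟨b, hb⟩ := SOF.exists_gt (Set.countable_singleton i)
    exact ⟨b, hb i rfl⟩
  -- step 1 : per-i eventual constancy of j ↦ v (x j - x i)
  have hstep : ∀ i : SOFIdx, ∃ s, i < s ∧ ∀ j, s ≤ j → v (x j - x i) = v (x s - x i) := by
    intro i
    obtain ⟨t, hti⟩ := hsucc i
    have hmono : ∀ a b : SOFIdx, a ≤ b →
        v (x (max b t) - x i) ≤ v (x (max a t) - x i) := by
      intro a b hab
      apply hconv
      · exact sub_pos.2 (hx i _ (lt_of_lt_of_le hti (le_max_right a t)))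
      · have := hxmono (max a t) (max b t) (max_le_max hab le_rfl)
        linarith
    obtain ⟨b, hb⟩ := SOF.antitone_eventually_const
      (fun j => v (x (max j t) - x i)) hmono hΓ2
    refine ⟨max b t, lt_of_lt_of_le hti (le_max_right b t), ?_⟩
    intro j hj
    have h1 := hb j (le_trans (le_max_left b t) hj)
    have h2 := hb (max b t) (le_max_left b t)
    have hjt : max j t = j := max_eq_left (le_trans (le_max_right b t) hj)
    have hbt : max (max b t) t = max b t := max_eq_left (le_max_right b t)
    rw [hjt] at h1
    rw [hbt] at h2
    rw [h1, ← h2]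
  choose σ hσlt hσeq using hstep
  -- step 2 : club of closure points of σ
  have wf : WellFounded ((· < ·) : SOFIdx → SOFIdx → Prop) := IsWellFounded.wf
  have hclub : ∀ a : SOFIdx, ∃ c, a < c ∧ ∀ i, i < c → σ i < c := by
    intro a
    let A : ℕ → SOFIdx := fun n => Nat.rec a (fun _ An => SOF.ub (σ '' Set.Iic An ∪ {An})) n
    have hAcnt : ∀ n : ℕ, ((σ '' Set.Iic (A n) ∪ {A n}) : Set SOFIdx).Countable := by
      intro n
      refine Set.Countable.union (Set.Countable.image ?_ σ) (Set.countable_singleton _)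
      have hIic : Set.Iic (A n) = Set.Iio (A n) ∪ {A n} := by
        ext y; simp [le_iff_lt_or_eq]
      rw [hIic]
      exact (SOF.countable_Iio _).union (Set.countable_singleton _)
    have hAstep : ∀ n : ℕ, A n < A (n+1) ∧ ∀ i, i ≤ A n → σ i < A (n+1) := by
      intro n
      constructor
      · exact SOF.lt_ub (hAcnt n) (Set.mem_union_right _ rfl)
      · intro i hi
        exact SOF.lt_ub (hAcnt n) (Set.mem_union_left _ ⟨i, hi, rfl⟩)
    have hU : {b : SOFIdx | ∀ n, A n < b}.Nonempty := by
      obtain ⟨b, hb⟩ := SOF.exists_gt (Set.countable_range A)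
      exact ⟨b, fun n => hb _ (Set.mem_range_self n)⟩
    refine ⟨wf.min _ hU, ?_, ?_⟩
    · exact (wf.min_mem _ hU) 0
    · intro i hic
      have hile : ∃ n, i ≤ A n := by
        by_contra hcon
        push_neg at hcon
        exact absurd hic (wf.not_lt_min _ (show i ∈ {b : SOFIdx | ∀ n, A n < b} from fun n => hcon n))
      obtain ⟨n, hn⟩ := hile
      exact lt_trans ((hAstep n).2 i hn) ((wf.min_mem _ hU) (n+1))
  -- step 3 : β and its eventual constancy
  set β : SOFIdx → Γ := fun i => v (x (σ i) - x i) with hβdef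
  have hβmono : ∀ i i' : SOFIdx, i ≤ i' → β i ≤ β i' := by
    intro i i' h
    have h1 : β i = v (x (max (σ i) (σ i')) - x i) := (hσeq i _ (le_max_left _ _)).symm
    have h2 : β i' = v (x (max (σ i) (σ i')) - x i') := (hσeq i' _ (le_max_right _ _)).symm
    rw [h1, h2]
    apply hconv
    · exact sub_pos.2 (hx i' _ (lt_of_lt_of_le (hσlt i') (le_max_right (σ i) (σ i'))))
    · have := hxmono i i' h
      linarith
  obtain ⟨b₂, hb₂⟩ := SOF.antitone_eventually_const (fun i => -β i)
    (fun i j hij => neg_le_neg (hβmono i j hij)) hΓ2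
  have hβconst : ∀ i, b₂ ≤ i → β i = β b₂ := fun i hi => neg_inj.1 (hb₂ i hi)
  -- step 4 : base point p and set C
  obtain ⟨p, hpb, hpC⟩ := hclub b₂
  set e : K := x (σ p) - x p with hedef
  have he0 : 0 < e := sub_pos.2 (hx p (σ p) (hσlt p))
  have hve : v e = β p := rfl
  set C : Set SOFIdx := {i | (∀ i', i' < i → σ i' < i) ∧ p < i} with hCdef
  have hCunb : ∀ a : SOFIdx, ∃ c ∈ C, a < c := by
    intro a
    obtain ⟨c, hc1, hc2⟩ := hclub (max a p)
    exact ⟨c, ⟨hc2, lt_of_le_of_lt (le_max_right a p) hc1⟩,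
      lt_of_le_of_lt (le_max_left a p) hc1⟩
  have hCuncnt : ¬ C.Countable := by
    intro hcnt
    obtain ⟨b, hb⟩ := SOF.exists_gt hcnt
    obtain ⟨c, hcC, hbc⟩ := hCunb b
    exact absurd (hb c hcC) (not_lt.2 hbc.le)
  -- valuation facts on C
  have hvxp : ∀ i ∈ C, v (x i - x p) = β p := by
    intro i hi
    exact hσeq p i (hi.1 p hi.2).le
  have hvxx : ∀ i j : SOFIdx, i ∈ C → j ∈ C → i < j → v (x j - x i) = β p := by
    intro i j hi hj hij
    have h2 : v (x j - x i) = β i := hσeq i j (hj.1 i hij).le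
    rw [h2, hβconst i (lt_trans hpb hi.2).le, ← hβconst p hpb.le]
  set y : SOFIdx → K := fun i => (x i - x p) / e with hydef
  have hymono : ∀ i j : SOFIdx, i ≤ j → y i ≤ y j := by
    intro i j h
    exact (div_le_div_iff_of_pos_right he0).2 (by have := hxmono i j h; linarith)
  have hy0 : ∀ i ∈ C, 0 < y i := fun i hi => div_pos (sub_pos.2 (hx p i hi.2)) he0
  have hyveq : ∀ i ∈ C, v (y i) = 0 := by
    intro i hi
    have hxne : x i - x p ≠ 0 := (sub_pos.2 (hx p i hi.2)).ne'
    show v ((x i - x p) / e) = 0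
    rw [hvdiv _ _ hxne he0.ne', hvxp i hi, hve, _root_.sub_self]
  have hydiff : ∀ i j : SOFIdx, i ∈ C → j ∈ C → i < j →
      v (y j - y i) = 0 ∧ 0 < y j - y i := by
    intro i j hi hj hij
    have hpos : 0 < x j - x i := sub_pos.2 (hx i j hij)
    have hyy : y j - y i = (x j - x i) / e := by
      show (x j - x p) / e - (x i - x p) / e = _
      rw [div_sub_div_same]; congr 1; ring
    constructor
    · rw [hyy, hvdiv _ _ hpos.ne' he0.ne', hvxx i j hi hj hij, hve, _root_.sub_self]
    · rw [hyy]; exact div_pos hpos he0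
  -- step 5 : assign a rational to each element of C
  have main : ∀ i : ↥C, ∃ kl : ℕ × ℕ, 0 < kl.2 ∧ y i < (kl.1 : K)/(kl.2:K) ∧
      ∀ j, j ∈ C → (i:SOFIdx) < j → (kl.1:K)/(kl.2:K) < y j := by
    rintro ⟨i, hi⟩
    have hne : {j | j ∈ C ∧ i < j}.Nonempty := by
      obtain ⟨c, h1, h2⟩ := hCunb i; exact ⟨c, h1, h2⟩
    set i₁ := wf.min _ hne with hi₁def
    have hi₁ : i₁ ∈ C ∧ i < i₁ := wf.min_mem _ hne
    have hi₁le : ∀ j, j ∈ C → i < j → i₁ ≤ j := by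
      intro j hj hij
      exact not_lt.1 (wf.not_lt_min _ (show j ∈ {j | j ∈ C ∧ i < j} from ⟨hj, hij⟩))
    obtain ⟨hd0, hdpos⟩ := hydiff i i₁ hi hi₁.1 hi₁.2
    obtain ⟨n, hn⟩ := hbound (y i) (hyveq i hi)
    obtain ⟨m, hm0, hm⟩ := hlow _ hdpos hd0
    obtain ⟨k, l, hl0, hkl1, hkl2⟩ := SOF.rat_btwn (hy0 i hi) hn hm0
      (B := y i₁) (by linarith)
    refine ⟨(k, l), hl0, hkl1, ?_⟩
    intro j hj hij
    exact lt_of_lt_of_le hkl2 (hymono i₁ j (hi₁le j hj hij))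
  choose kl hkl using main
  have hQmono : ∀ a b : ↥C, (a:SOFIdx) < (b:SOFIdx) →
      ((kl a).1 : K)/((kl a).2:K) < ((kl b).1:K)/((kl b).2:K) := by
    intro a b h
    exact lt_trans ((hkl a).2.2 b b.2 h) (hkl b).2.1
  have hinj : Function.Injective kl := by
    intro a b hab
    rcases lt_trichotomy (a:SOFIdx) (b:SOFIdx) with h|h|h
    · exact absurd (hQmono a b h) (by rw [hab]; exact lt_irrefl _)
    · exact Subtype.ext h
    · exact absurd (hQmono b a h) (by rw [hab]; exact lt_irrefl _)
  have : Countable ↥C := hinj.countable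
  exact hCuncnt (Set.countable_coe_iff.2 this)

/-- Let `K` be an ordered field with a convex valuation `v` onto an ordered abelian
group `Γ` (so `v` is a surjective valuation, decreasing on positive elements, which
encodes convexity of the valuation ring) with archimedean residue field (every element
of the valuation ring is bounded by a natural number). Then `K` is short iff `Γ` is
short. -/
theorem short_ordered_field_iff_valueGroup {K Γ : Type u} [Field K] [LinearOrder K] [IsStrictOrderedRing K]
    [AddCommGroup Γ] [LinearOrder Γ] [IsOrderedAddMonoid Γ] (v : K → Γ)
    (hneg : ∀ x : K, x ≠ 0 → v (-x) = v x)
    (hmul : ∀ x y : K, x ≠ 0 → y ≠ 0 → v (x * y) = v x + v y)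
    (hconv : ∀ x y : K, 0 < x → x ≤ y → v y ≤ v x)
    (hsurj : ∀ γ : Γ, ∃ x : K, x ≠ 0 ∧ v x = γ)
    (hres : ∀ x : K, (x = 0 ∨ 0 ≤ v x) → ∃ n : ℕ, x < (n : K)) :
    RelShort ((· < ·) : K → K → Prop) ↔ RelShort ((· < ·) : Γ → Γ → Prop) := by
  have hpos : ∀ γ : Γ, ∃ z : K, 0 < z ∧ v z = γ := by
    intro γ
    obtain ⟨x, hx0, hxv⟩ := hsurj γ
    rcases lt_trichotomy x 0 with h|h|h
    · exact ⟨-x, by linarith, by rw [hneg x hx0, hxv]⟩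
    · exact absurd h hx0
    · exact ⟨x, h, hxv⟩
  constructor
  · intro hK
    constructor
    · rintro ⟨γ, hγ⟩
      choose z hz0 hzv using fun i => hpos (γ i)
      refine hK.2 ⟨z, fun i j hij => ?_⟩
      by_contra hcon
      have h := hconv _ _ (hz0 i) (not_lt.1 hcon)
      rw [hzv i, hzv j] at h
      exact absurd (hγ i j hij) (not_lt.2 h)
    · rintro ⟨γ, hγ⟩
      choose z hz0 hzv using fun i => hpos (γ i)
      refine hK.1 ⟨z, fun i j hij => ?_⟩
      by_contra hcon
      have h := hconv _ _ (hz0 j) (not_lt.1 hcon)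
      rw [hzv i, hzv j] at h
      exact absurd (hγ i j hij) (not_lt.2 h)
  · intro hΓ
    constructor
    · rintro ⟨f, hf⟩
      exact SOF.noInc v hmul hconv hres hΓ.2 f hf
    · rintro ⟨f, hf⟩
      exact SOF.noInc v hmul hconv hres hΓ.2 (fun i => -f i)
        (fun i j hij => neg_lt_neg (hf i j hij))
end
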